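/- arXiv:2508.09608 — 3 statements merged into one kernel-verified Lean document; each statement's English description precedes it below -/
import Mathlib

section
/- For every integer n ≥ 0, p(7n + 5) ≡ 0 (mod 7), where p denotes the partition function. -/
open PowerSeries

namespace Theorems100

noncomputable section

variable {α : Type*}

open Finset

open scoped Classical

/-- The partial product for the generating function for odd partitions.
TODO: As `m` tends to infinity, this converges (in the `X`-adic topology).

If `m` is sufficiently large, the `i`th coefficient gives the number of odd partitions of the
natural number `i`: proved in `oddGF_prop`.
It is stated for an arbitrary field `α`, though it usually suffices to use `ℚ` or `ℝ`.
-/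
def partialOddGF (m : ℕ) [Field α] :=
  ∏ i ∈ range m, (1 - (X : PowerSeries α) ^ (2 * i + 1))⁻¹

/-- The partial product for the generating function for distinct partitions.
TODO: As `m` tends to infinity, this converges (in the `X`-adic topology).

If `m` is sufficiently large, the `i`th coefficient gives the number of distinct partitions of the
natural number `i`: proved in `distinctGF_prop`.
It is stated for an arbitrary commutative semiring `α`, though it usually suffices to use `ℕ`, `ℚ`
or `ℝ`.
-/
def partialDistinctGF (m : ℕ) [CommSemiring α] :=
  ∏ i ∈ range m, (1 + (X : PowerSeries α) ^ (i + 1))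

open Finset.HasAntidiagonal

universe u
variable {ι : Type u}

/-- A convenience constructor for the power series whose coefficients indicate a subset. -/
def indicatorSeries (α : Type*) [Semiring α] (s : Set ℕ) : PowerSeries α :=
  PowerSeries.mk fun n => if n ∈ s then 1 else 0

theorem coeff_indicator (s : Set ℕ) [Semiring α] (n : ℕ) :
    coeff (R := α) n (indicatorSeries _ s) = if n ∈ s then 1 else 0 :=
  coeff_mk _ _

theorem coeff_indicator_pos (s : Set ℕ) [Semiring α] (n : ℕ) (h : n ∈ s) :
    coeff (R := α) n (indicatorSeries _ s) = 1 := by rw [coeff_indicator, if_pos h]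

theorem coeff_indicator_neg (s : Set ℕ) [Semiring α] (n : ℕ) (h : n ∉ s) :
    coeff (R := α) n (indicatorSeries _ s) = 0 := by rw [coeff_indicator, if_neg h]

theorem constantCoeff_indicator (s : Set ℕ) [Semiring α] :
    constantCoeff (R := α) (indicatorSeries _ s) = if 0 ∈ s then 1 else 0 :=
  rfl

theorem two_series (i : ℕ) [Semiring α] :
    1 + (X : PowerSeries α) ^ i.succ = indicatorSeries α {0, i.succ} := by
  ext n
  simp only [coeff_indicator, coeff_one, coeff_X_pow, Set.mem_insert_iff, Set.mem_singleton_iff,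
    map_add]
  cases' n with d
  · simp [(Nat.succ_ne_zero i).symm]
  · simp [Nat.succ_ne_zero d]

theorem num_series' [Field α] (i : ℕ) :
    (1 - (X : PowerSeries α) ^ (i + 1))⁻¹ = indicatorSeries α {k | i + 1 ∣ k} := by
  rw [PowerSeries.inv_eq_iff_mul_eq_one]
  · ext n
    cases n with
    | zero => simp [mul_sub, zero_pow, constantCoeff_indicator]
    | succ n =>
      simp only [coeff_one, if_false, mul_sub, mul_one, coeff_indicator,
        LinearMap.map_sub, reduceCtorEq]
      simp_rw [coeff_mul, coeff_X_pow, coeff_indicator, @boole_mul _ _ _ _]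
      erw [@sum_ite _ _ _ _ _ (fun _ => Classical.propDecidable _), sum_ite]
      simp_rw [@filter_filter _ _ _ _ _, sum_const_zero, add_zero, sum_const, nsmul_eq_mul, mul_one,
        sub_eq_iff_eq_add, zero_add]
      symm
      split_ifs with h
      · suffices #{a ∈ antidiagonal (n + 1) | i + 1 ∣ a.fst ∧ a.snd = i + 1} = 1 by
          simp only [Set.mem_setOf_eq]; convert congr_arg ((↑) : ℕ → α) this; norm_cast
        rw [card_eq_one]
        cases' h with p hp
        refine ⟨((i + 1) * (p - 1), i + 1), ?_⟩
        ext ⟨a₁, a₂⟩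
        simp only [mem_filter, Prod.mk.injEq, HasAntidiagonal.mem_antidiagonal, mem_singleton]
        constructor
        · rintro ⟨a_left, ⟨a, rfl⟩, rfl⟩
          refine ⟨?_, rfl⟩
          rw [Nat.mul_sub_left_distrib, ← hp, ← a_left, mul_one, Nat.add_sub_cancel]
        · rintro ⟨rfl, rfl⟩
          match p with
          | 0 => rw [mul_zero] at hp; cases hp
          | p + 1 => rw [hp]; simp [mul_add]
      · suffices #{a ∈ antidiagonal (n + 1) | i + 1 ∣ a.fst ∧ a.snd = i + 1} = 0 by
          simp only [Set.mem_setOf_eq]; convert congr_arg ((↑) : ℕ → α) this; norm_cast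
        rw [card_eq_zero]
        apply eq_empty_of_forall_notMem
        simp only [Prod.forall, mem_filter, not_and, HasAntidiagonal.mem_antidiagonal]
        rintro _ h₁ h₂ ⟨a, rfl⟩ rfl
        apply h
        simp [← h₂]
  · simp [zero_pow]

def mkOdd : ℕ ↪ ℕ :=
  ⟨fun i => 2 * i + 1, fun x y h => by linarith⟩

-- The main workhorse of the partition theorem proof.
theorem partialGF_prop (α : Type*) [CommSemiring α] (n : ℕ) (s : Finset ℕ) (hs : ∀ i ∈ s, 0 < i)
    (c : ℕ → Set ℕ) (hc : ∀ i, i ∉ s → 0 ∈ c i) :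
    #{p : n.Partition | (∀ j, p.parts.count j ∈ c j) ∧ ∀ j ∈ p.parts, j ∈ s} =
      coeff (R := α) n (∏ i ∈ s, indicatorSeries α ((· * i) '' c i)) := by
  simp_rw [coeff_prod, coeff_indicator, prod_boole, sum_boole]
  apply congr_arg
  simp only [mem_univ, forall_true_left, not_and, not_forall, exists_prop,
    Set.mem_image, not_exists]
  set φ : (a : Nat.Partition n) →
    a ∈ filter (fun p ↦ (∀ (j : ℕ), Multiset.count j p.parts ∈ c j) ∧ ∀ j ∈ p.parts, j ∈ s) univ →
    ℕ →₀ ℕ := fun p _ => {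
      toFun := fun i => Multiset.count i p.parts • i
      support := Finset.filter (fun i => i ≠ 0) p.parts.toFinset
      mem_support_toFun := fun a => by
        simp only [smul_eq_mul, ne_eq, mul_eq_zero, Multiset.count_eq_zero]
        rw [not_or, not_not]
        simp only [Multiset.mem_toFinset, not_not, mem_filter] }
  refine Finset.card_bij φ ?_ ?_ ?_
  · intro a ha
    simp only [φ, not_forall, not_exists, not_and, exists_prop, mem_filter]
    rw [mem_finsuppAntidiag]
    dsimp only [ne_eq, smul_eq_mul, id_eq, eq_mpr_eq_cast, le_eq_subset, Finsupp.coe_mk]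
    simp only [mem_univ, forall_true_left, not_and, not_forall, exists_prop,
      mem_filter, true_and] at ha
    refine ⟨⟨?_, fun i ↦ ?_⟩, fun i _ ↦ ⟨a.parts.count i, ha.1 i, rfl⟩⟩
    · conv_rhs => simp [← a.parts_sum]
      rw [sum_multiset_count_of_subset _ s]
      · simp only [smul_eq_mul]
      · intro i
        simp only [Multiset.mem_toFinset, not_not, mem_filter]
        apply ha.2
    · simp only [ne_eq, Multiset.mem_toFinset, not_not, mem_filter, and_imp]
      exact fun hi _ ↦ ha.2 i hi
  · intro p₁ hp₁ p₂ hp₂ h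
    apply Nat.Partition.ext
    simp only [true_and, mem_univ, mem_filter] at hp₁ hp₂
    ext i
    simp only [φ, ne_eq, Multiset.mem_toFinset, not_not, smul_eq_mul, Finsupp.mk.injEq] at h
    by_cases hi : i = 0
    · rw [hi]
      rw [Multiset.count_eq_zero_of_notMem]
      · rw [Multiset.count_eq_zero_of_notMem]
        intro a; exact Nat.lt_irrefl 0 (hs 0 (hp₂.2 0 a))
      intro a; exact Nat.lt_irrefl 0 (hs 0 (hp₁.2 0 a))
    · rw [← mul_left_inj' hi]
      rw [funext_iff] at h
      exact h.2 i
  · simp only [φ, mem_filter, mem_finsuppAntidiag, mem_univ, exists_prop, true_and, and_assoc]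
    rintro f ⟨hf, hf₃, hf₄⟩
    have hf' : f ∈ finsuppAntidiag s n := mem_finsuppAntidiag.mpr ⟨hf, hf₃⟩
    simp only [mem_finsuppAntidiag] at hf'
    refine ⟨⟨∑ i ∈ s, Multiset.replicate (f i / i) i, ?_, ?_⟩, ?_, ?_, ?_⟩
    · intro i hi
      simp only [exists_prop, Multiset.mem_sum, mem_map, Function.Embedding.coeFn_mk] at hi
      rcases hi with ⟨t, ht, z⟩
      apply hs
      rwa [Multiset.eq_of_mem_replicate z]
    · simp_rw [Multiset.sum_sum, Multiset.sum_replicate, Nat.nsmul_eq_mul]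
      rw [← hf'.1]
      refine sum_congr rfl fun i hi => Nat.div_mul_cancel ?_
      rcases hf₄ i hi with ⟨w, _, hw₂⟩
      rw [← hw₂]
      exact dvd_mul_left _ _
    · intro i
      simp_rw [Multiset.count_sum', Multiset.count_replicate, sum_ite_eq']
      split_ifs with h
      · rcases hf₄ i h with ⟨w, hw₁, hw₂⟩
        rwa [← hw₂, Nat.mul_div_cancel _ (hs i h)]
      · exact hc _ h
    · intro i hi
      rw [Multiset.mem_sum] at hi
      rcases hi with ⟨j, hj₁, hj₂⟩
      rwa [Multiset.eq_of_mem_replicate hj₂]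
    · ext i
      simp_rw [Multiset.count_sum', Multiset.count_replicate, sum_ite_eq']
      simp only [ne_eq, Multiset.mem_toFinset, not_not, smul_eq_mul, ite_mul,
        zero_mul, Finsupp.coe_mk]
      split_ifs with h
      · apply Nat.div_mul_cancel
        rcases hf₄ i h with ⟨w, _, hw₂⟩
        apply Dvd.intro_left _ hw₂
      · apply symm
        rw [← Finsupp.notMem_support_iff]
        exact notMem_mono hf'.2 h


end
end Theorems100

namespace Ram7

noncomputable section
open Finset PowerSeries Theorems100

abbrev K : Type := ZMod 7

instance : Fact (Nat.Prime 7) := ⟨by norm_num⟩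

/-- partial Euler product -/
def Fe (m : ℕ) : PowerSeries K := ∏ i ∈ range m, (1 - (X : PowerSeries K) ^ (i + 1))

/-- partial inverse Euler product -/
def Ge (m : ℕ) : PowerSeries K := ∏ i ∈ range m, ((1 : PowerSeries K) - X ^ (i + 1))⁻¹

/-- partition generating function mod 7 -/
def Pp : PowerSeries K := PowerSeries.mk fun N => (Fintype.card (Nat.Partition N) : K)

lemma constCoeff_one_sub_pow (i : ℕ) :
    constantCoeff (R := K) (1 - X ^ (i + 1)) ≠ 0 := by
  rw [map_sub, map_one, map_pow, constantCoeff_X]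
  simp

lemma Ge_mul_Fe (m : ℕ) : Ge m * Fe m = 1 := by
  rw [Ge, Fe, ← Finset.prod_mul_distrib]
  apply Finset.prod_eq_one
  intro i _
  exact PowerSeries.inv_mul_cancel _ (constCoeff_one_sub_pow i)

/-- the key adaptation of the Archive's `partialGF_prop`. -/
lemma pc_eq (m n : ℕ) (h : n ≤ m) :
    coeff (R := K) n (Ge m) = (Fintype.card (Nat.Partition n) : K) := by
  classical
  rw [Ge]
  have := partialGF_prop K n ((range m).map ⟨Nat.succ, Nat.succ_injective⟩)
      (by simp only [mem_map, Function.Embedding.coeFn_mk]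
          rintro i ⟨_, _, rfl⟩; exact Nat.succ_pos _)
      (fun _ => Set.univ) (fun _ _ => trivial)
  rw [Finset.prod_map] at this
  simp only [Function.Embedding.coeFn_mk] at this
  have h2 : ∀ i : ℕ, ((· * Nat.succ i) '' Set.univ) = {k | i + 1 ∣ k} := by
    intro i
    ext k
    constructor
    · rintro ⟨p, -, rfl⟩; exact Dvd.intro_left p rfl
    · rintro ⟨p, rfl⟩; exact ⟨p, trivial, mul_comm _ _⟩
  simp only [h2] at this
  simp_rw [← num_series'] at this
  rw [← this]
  have h3 : ∀ p : n.Partition,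
      ((∀ j : ℕ, Multiset.count j p.parts ∈ (Set.univ : Set ℕ)) ∧
        ∀ j ∈ p.parts, j ∈ (range m).map ⟨Nat.succ, Nat.succ_injective⟩) := by
    intro p
    refine ⟨fun _ => trivial, fun j hj => ?_⟩
    have hj1 : 1 ≤ j := p.parts_pos hj
    have hjn : j ≤ n := by
      simpa [p.parts_sum] using Multiset.single_le_sum (fun _ _ => Nat.zero_le _) _ hj
    simp only [mem_map, mem_range, Function.Embedding.coeFn_mk]
    exact ⟨j - 1, by omega, by omega⟩
  rw [Finset.filter_true_of_mem (fun p _ => h3 p), Finset.card_univ]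

/-- replace a factor by one with the same low coefficients -/
lemma coeff_mul_congr {A A' B : PowerSeries K} {N : ℕ}
    (h : ∀ c ≤ N, coeff (R := K) c A = coeff (R := K) c A') :
    coeff (R := K) N (A * B) = coeff (R := K) N (A' * B) := by
  rw [coeff_mul, coeff_mul]
  refine Finset.sum_congr rfl fun p hp => ?_
  rw [Finset.HasAntidiagonal.mem_antidiagonal] at hp
  rw [h p.1 (by omega)]

lemma coeff_mul_congr' {A B B' : PowerSeries K} {N : ℕ}
    (h : ∀ c ≤ N, coeff (R := K) c B = coeff (R := K) c B') :
    coeff (R := K) N (A * B) = coeff (R := K) N (A * B') := by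
  rw [mul_comm A B, mul_comm A B']; exact coeff_mul_congr h

/-- a product of series that are 1 + (order > t) is 1 + (order > t) -/
lemma coeff_prod_tail {σ : Type*} (s : Finset σ) (e : σ → ℕ) (t : ℕ)
    (he : ∀ j ∈ s, t < e j) :
    ∀ c ≤ t, coeff (R := K) c (∏ j ∈ s, (1 - (X : PowerSeries K) ^ e j)) =
      if c = 0 then 1 else 0 := by
  classical
  induction s using Finset.induction with
  | empty => intro c _; simp [coeff_one]
  | @insert a s ha ih =>
    intro c hc
    rw [Finset.prod_insert ha, coeff_mul]
    have ht : t < e a := he a (Finset.mem_insert_self a s)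
    have : ∀ p ∈ antidiagonal c, (coeff (R := K) p.1) (1 - (X : PowerSeries K) ^ e a)
        * coeff (R := K) p.2 (∏ j ∈ s, (1 - (X : PowerSeries K) ^ e j)) =
        if p.1 = 0 then (if p.2 = 0 then 1 else 0) else 0 := by
      rintro ⟨p1, p2⟩ hp
      rw [Finset.HasAntidiagonal.mem_antidiagonal] at hp
      simp only
      have hp1 : p1 ≤ t := by omega
      have hp2 : p2 ≤ t := by omega
      rw [ih (fun j hj => he j (Finset.mem_insert_of_mem hj)) p2 hp2]
      rw [map_sub, coeff_one, coeff_X_pow]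
      have : p1 ≠ e a := by omega
      rcases eq_or_ne p1 0 with rfl | h1
      · simp [this]
      · simp [this, h1]
    rw [Finset.sum_congr rfl this]
    rcases eq_or_ne c 0 with rfl | hc0
    · simp
    · rw [Finset.sum_eq_zero, if_neg hc0]
      rintro ⟨p1, p2⟩ hp
      rw [Finset.HasAntidiagonal.mem_antidiagonal] at hp
      simp only
      split_ifs with h1 h2
      · omega
      · rfl
      · rfl

/-- Euler recurrence: `P * Fe m` agrees with 1 up to degree `m`. -/
lemma euler (m N : ℕ) (hN : N ≤ m) :
    coeff (R := K) N (Pp * Fe m) = if N = 0 then 1 else 0 := by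
  have h : ∀ c ≤ N, coeff (R := K) c Pp = coeff (R := K) c (Ge m) := by
    intro c hc
    rw [Pp, coeff_mk, pc_eq m c (le_trans hc hN)]
  rw [coeff_mul_congr h, Ge_mul_Fe, coeff_one]

end
end Ram7
namespace Ram7
noncomputable section
open Finset PowerSeries

/-- Gaussian binomial coefficients as power series over `K`. -/
def gb : ℕ → ℕ → PowerSeries K
  | _, 0 => 1
  | 0, _ + 1 => 0
  | n + 1, k + 1 => gb n (k + 1) * X ^ (k + 1) + gb n k

@[simp] lemma gb_zero_right (n : ℕ) : gb n 0 = 1 := by cases n <;> rfl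

lemma gb_succ_succ (n k : ℕ) :
    gb (n + 1) (k + 1) = gb n (k + 1) * X ^ (k + 1) + gb n k := rfl

lemma gb_eq_zero : ∀ {n k : ℕ}, n < k → gb n k = 0 := by
  intro n
  induction n with
  | zero => rintro (_ | k) h; · omega
            rfl
  | succ n ih =>
    rintro (_ | k) h
    · omega
    · rw [gb_succ_succ, ih (by omega), ih (by omega), zero_mul, zero_add]

@[simp] lemma gb_self : ∀ n : ℕ, gb n n = 1 := by
  intro n
  induction n with
  | zero => rfl
  | succ n ih => rw [gb_succ_succ, gb_eq_zero (by omega), zero_mul, zero_add, ih]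

/-- the second Pascal rule for Gaussian binomials -/
lemma gb_pascal2 : ∀ n k : ℕ, k ≤ n →
    gb (n + 1) (k + 1) = gb n (k + 1) + X ^ (n - k) * gb n k := by
  intro n
  induction n with
  | zero =>
    intro k hk
    interval_cases k
    simp [gb_succ_succ, gb_eq_zero]
  | succ n ih =>
    intro k hk
    rcases eq_or_lt_of_le hk with rfl | hk'
    · rw [gb_self, gb_eq_zero (by omega), zero_add, Nat.sub_self, pow_zero, gb_self, one_mul]
    have hkn : k ≤ n := by omega
    match k with
    | 0 =>
      calc gb (n + 1 + 1) (0 + 1)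
          = gb (n + 1) (0 + 1) * X ^ (0 + 1) + gb (n + 1) 0 := gb_succ_succ _ _
        _ = (gb n (0 + 1) + X ^ (n - 0) * gb n 0) * X ^ (0 + 1) + 1 := by
            rw [ih 0 (Nat.zero_le n), gb_zero_right, gb_zero_right]
        _ = (gb n (0 + 1) * X ^ (0 + 1) + gb n 0) + X ^ (n + 1 - 0) * 1 := by
            rw [gb_zero_right, Nat.sub_zero, Nat.sub_zero, pow_succ]
            ring
        _ = gb (n + 1) (0 + 1) + X ^ (n + 1 - 0) * gb (n + 1) 0 := by
            rw [← gb_succ_succ, gb_zero_right]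
    | j + 1 =>
      have hjn : j ≤ n := by omega
      obtain ⟨a, rfl⟩ : ∃ a, n = j + 1 + a := ⟨n - (j + 1), by omega⟩
      have e1 : j + 1 + a - (j + 1) = a := by omega
      have e2 : j + 1 + a - j = a + 1 := by omega
      have e3 : j + 1 + a + 1 - (j + 1) = a + 1 := by omega
      calc gb (j + 1 + a + 1 + 1) (j + 1 + 1)
          = gb (j + 1 + a + 1) (j + 1 + 1) * X ^ (j + 1 + 1) + gb (j + 1 + a + 1) (j + 1) :=
            gb_succ_succ _ _
        _ = (gb (j + 1 + a) (j + 1 + 1) + X ^ a * gb (j + 1 + a) (j + 1)) * X ^ (j + 1 + 1)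
              + (gb (j + 1 + a) (j + 1) + X ^ (a + 1) * gb (j + 1 + a) j) := by
            rw [ih (j + 1) hkn, e1, ih j hjn, e2]
        _ = (gb (j + 1 + a) (j + 1 + 1) * X ^ (j + 1 + 1) + gb (j + 1 + a) (j + 1))
              + X ^ (a + 1) * (gb (j + 1 + a) (j + 1) * X ^ (j + 1) + gb (j + 1 + a) j) := by
            ring
        _ = gb (j + 1 + a + 1) (j + 1 + 1) + X ^ (j + 1 + a + 1 - (j + 1)) * gb (j + 1 + a + 1) (j + 1) := by
            rw [e3, ← gb_succ_succ, ← gb_succ_succ]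

lemma Fe_succ (s : ℕ) : Fe (s + 1) = Fe s * (1 - X ^ (s + 1)) := by
  rw [Fe, Fe, Finset.prod_range_succ]

/-- `gb m k * Fe k * Fe (m-k) = Fe m` -/
lemma gb_mul_Fe : ∀ m k : ℕ, k ≤ m → gb m k * Fe k * Fe (m - k) = Fe m := by
  intro m
  induction m with
  | zero => intro k hk; interval_cases k; simp [Fe]
  | succ m ih =>
    intro k hk
    match k with
    | 0 => simp only [gb_zero_right, one_mul, Nat.sub_zero, Fe]
           rw [Finset.prod_range_zero, one_mul]
    | j + 1 =>
      rcases eq_or_lt_of_le hk with heq | hlt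
      · rw [heq, gb_self, one_mul, Nat.sub_self]
        rw [show Fe 0 = 1 from by simp [Fe], mul_one]
      have hjm : j ≤ m := by omega
      have hj1m : j + 1 ≤ m ∨ j + 1 = m + 1 := by omega
      rw [gb_succ_succ, add_mul, add_mul]
      have hsub : m + 1 - (j + 1) = (m - j - 1) + 1 ∨ j = m := by omega
      rcases eq_or_lt_of_le hjm with rfl | hjlt
      · -- j = m, so k = m+1 contradicts hlt
        omega
      · have hj1 : j + 1 ≤ m := by omega
        have e1 : m + 1 - (j + 1) = (m - (j + 1)) + 1 := by omega
        have e2 : m - j = m - (j+1) + 1 := by omega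
        -- first term
        have t1 : gb m (j + 1) * X ^ (j + 1) * Fe (j + 1) * Fe (m + 1 - (j + 1))
            = X ^ (j + 1) * (1 - X ^ (m - j)) * Fe m := by
          rw [e1, Fe_succ (m - (j+1))]
          have := ih (j + 1) hj1
          have e3 : m - (j + 1) + 1 = m - j := by omega
          calc gb m (j + 1) * X ^ (j + 1) * Fe (j + 1) * (Fe (m - (j + 1)) * (1 - X ^ (m - (j + 1) + 1)))
              = (gb m (j + 1) * Fe (j + 1) * Fe (m - (j + 1))) * (X ^ (j + 1) * (1 - X ^ (m - (j + 1) + 1))) := by ring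
            _ = Fe m * (X ^ (j + 1) * (1 - X ^ (m - (j + 1) + 1))) := by rw [this]
            _ = X ^ (j + 1) * (1 - X ^ (m - j)) * Fe m := by rw [e3]; ring
        have t2 : gb m j * Fe (j + 1) * Fe (m + 1 - (j + 1))
            = (1 - X ^ (j + 1)) * Fe m := by
          have e4 : m + 1 - (j + 1) = m - j := by omega
          rw [e4, Fe_succ j]
          calc gb m j * (Fe j * (1 - X ^ (j + 1))) * Fe (m - j)
              = (gb m j * Fe j * Fe (m - j)) * (1 - X ^ (j + 1)) := by ring
            _ = Fe m * (1 - X ^ (j + 1)) := by rw [ih j hjm]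
            _ = (1 - X ^ (j + 1)) * Fe m := by ring
        rw [t1, t2, Fe_succ m]
        have e5 : (j + 1) + (m - j) = m + 1 := by omega
        calc X ^ (j + 1) * (1 - X ^ (m - j)) * Fe m + (1 - X ^ (j + 1)) * Fe m
            = (1 - X ^ (j + 1) * X ^ (m - j)) * Fe m := by ring
          _ = Fe m * (1 - X ^ (m + 1)) := by rw [← pow_add, e5]; ring

lemma constCoeff_Fe (s : ℕ) : constantCoeff (R := K) (Fe s) ≠ 0 := by
  rw [Fe, map_prod]
  rw [Finset.prod_eq_one]
  · exact one_ne_zero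
  intro i _
  rw [map_sub, map_one, map_pow, constantCoeff_X, zero_pow (by omega), sub_zero]

lemma Fe_mul_Ge (s : ℕ) : Fe s * Ge s = 1 := by rw [mul_comm]; exact Ge_mul_Fe s

/-- gb as a product of Fe and Ge's -/
lemma gb_eq (m k : ℕ) (hk : k ≤ m) : gb m k = Fe m * Ge k * Ge (m - k) := by
  have h := gb_mul_Fe m k hk
  calc gb m k = gb m k * (Fe k * Ge k) * (Fe (m - k) * Ge (m - k)) := by
        rw [Fe_mul_Ge, Fe_mul_Ge, mul_one, mul_one]
    _ = (gb m k * Fe k * Fe (m - k)) * Ge k * Ge (m - k) := by ring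
    _ = Fe m * Ge k * Ge (m - k) := by rw [h]

/-- the tail product: `Fe m * Ge k` has no coefficients in degrees `1..k` -/
lemma coeff_Fe_mul_Ge (m k : ℕ) (hk : k ≤ m) (c : ℕ) (hc : c ≤ k) :
    coeff (R := K) c (Fe m * Ge k) = if c = 0 then 1 else 0 := by
  have hFe : Fe m = Fe k * ∏ i ∈ Finset.Ico k m, (1 - (X : PowerSeries K) ^ (i + 1)) := by
    rw [Fe, Fe, Finset.range_eq_Ico,
      ← Finset.prod_Ico_consecutive _ (Nat.zero_le k) hk, ← Finset.range_eq_Ico]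
  rw [hFe, mul_comm (Fe k), mul_assoc, Fe_mul_Ge, mul_one]
  exact coeff_prod_tail _ _ k (fun j hj => by rw [Finset.mem_Ico] at hj; omega) c hc

/-- small coefficients of Gaussian binomials are partition numbers -/
lemma coeff_gb (m k M : ℕ) (hk : k ≤ m) (h1 : M ≤ k) (h2 : M ≤ m - k) :
    coeff (R := K) M (gb m k) = (Fintype.card (Nat.Partition M) : K) := by
  rw [gb_eq m k hk]
  have h : ∀ c ≤ M, coeff (R := K) c (Fe m * Ge k) = coeff (R := K) c 1 := by
    intro c hc
    rw [coeff_Fe_mul_Ge m k hk c (le_trans hc h1), coeff_one]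
  rw [coeff_mul_congr h, one_mul, pc_eq _ _ h2]

end
end Ram7
namespace Ram7
noncomputable section
open Finset PowerSeries

/-- triangular numbers -/
def Tr (k : ℕ) : ℕ := k * (k + 1) / 2

lemma Tr_succ (k : ℕ) : Tr (k + 1) = Tr k + (k + 1) := by
  have h : (k + 1) * (k + 1 + 1) = k * (k + 1) + 2 * (k + 1) := by ring
  have h2 : 2 ∣ k * (k + 1) := (Nat.even_mul_succ_self k).two_dvd
  rw [Tr, Tr]
  omega

/-- the exponent function in the finite Jacobi triple product -/
def E (b i : ℕ) : ℕ := if b ≤ i then Tr (i - b) else Tr (b - i - 1)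

lemma E_succ_succ (b i : ℕ) : E (b + 1) (i + 1) = E b i := by
  rw [E, E]
  rcases le_or_gt b i with h | h
  · rw [if_pos (by omega), if_pos h, show i + 1 - (b + 1) = i - b by omega]
  · rw [if_neg (by omega), if_neg (by omega), show b + 1 - (i + 1) - 1 = b - i - 1 by omega]

lemma E_step (b i : ℕ) : E b i + (i + 1) = b + E b (i + 1) := by
  rcases le_or_gt b i with h | h
  · rw [E, E, if_pos h, if_pos (by omega)]
    obtain ⟨s, rfl⟩ : ∃ s, i = b + s := ⟨i - b, by omega⟩
    rw [show b + s - b = s by omega, show b + s + 1 - b = s + 1 by omega, Tr_succ]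
    omega
  · rcases eq_or_lt_of_le (Nat.succ_le_of_lt h) with h' | h'
    · rw [E, E, if_neg (by omega), if_pos (by omega)]
      obtain rfl : b = i + 1 := by omega
      rw [show i + 1 - i - 1 = 0 by omega, show i + 1 - (i + 1) = 0 by omega]
      omega
    · rw [E, E, if_neg (by omega), if_neg (by omega)]
      obtain ⟨u, rfl⟩ : ∃ u, b = i + 1 + u + 1 := ⟨b - i - 2, by omega⟩
      rw [show i + 1 + u + 1 - i - 1 = u + 1 by omega,
        show i + 1 + u + 1 - (i + 1) - 1 = u by omega, Tr_succ]
      omega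

lemma E_zero_succ (b : ℕ) : E (b + 1) 0 = b + E b 0 := by
  match b with
  | 0 => rfl
  | b + 1 =>
    rw [E, E, if_neg (by omega), if_neg (by omega),
      show b + 1 + 1 - 0 - 1 = b + 1 by omega, show b + 1 - 0 - 1 = b by omega, Tr_succ]
    omega

/-- coefficient appearing in the finite Jacobi triple product -/
def jcf (b n i : ℕ) : PowerSeries K := (-1) ^ (b + i) * X ^ (E b i) * gb n i

lemma jcf_top (b n : ℕ) : jcf b n (n + 1) = 0 := by
  rw [jcf, gb_eq_zero (by omega), mul_zero]

lemma neg_one_pow_shift (b t : ℕ) : ((-1 : PowerSeries K)) ^ (b + 1 + (t + 1)) = (-1) ^ (b + t) := by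
  rw [show b + 1 + (t + 1) = (b + t) + 2 by omega, pow_add]
  norm_num

/-- key recurrence in `b` -/
lemma jcf_key_b (b n t : ℕ) :
    jcf (b + 1) (n + 1) (t + 1) = jcf b n t - X ^ b * jcf b n (t + 1) := by
  rw [jcf, jcf, jcf, neg_one_pow_shift, E_succ_succ, gb_succ_succ]
  have h1 : (X : PowerSeries K) ^ E b t * X ^ (t + 1) = X ^ b * X ^ E b (t + 1) := by
    rw [← pow_add, ← pow_add, E_step]
  have h2 : ((-1 : PowerSeries K)) ^ (b + (t + 1)) = -(-1 : PowerSeries K) ^ (b + t) := by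
    rw [show b + (t + 1) = (b + t) + 1 by omega, pow_succ]
    ring
  rw [h2]
  calc (-1 : PowerSeries K) ^ (b + t) * X ^ E b t * (gb n (t + 1) * X ^ (t + 1) + gb n t)
      = (-1) ^ (b + t) * X ^ E b t * gb n t
        + (-1) ^ (b + t) * (X ^ E b t * X ^ (t + 1)) * gb n (t + 1) := by ring
    _ = (-1) ^ (b + t) * X ^ E b t * gb n t
        + (-1) ^ (b + t) * (X ^ b * X ^ E b (t + 1)) * gb n (t + 1) := by rw [h1]
    _ = _ := by ring

lemma jcf_key_b0 (b n : ℕ) : jcf (b + 1) (n + 1) 0 = -(X ^ b * jcf b n 0) := by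
  rw [jcf, jcf, gb_zero_right, gb_zero_right, E_zero_succ, pow_succ, pow_add]
  ring

/-- key recurrence in `a` -/
lemma jcf_key_a (a b n t : ℕ) (hn : n = a + b) (ht : t ≤ n) :
    jcf b (n + 1) (t + 1) = jcf b n (t + 1) - X ^ (a + 1) * jcf b n t := by
  rw [jcf, jcf, jcf, gb_pascal2 n t ht]
  have h2 : ((-1 : PowerSeries K)) ^ (b + (t + 1)) = -(-1 : PowerSeries K) ^ (b + t) := by
    rw [show b + (t + 1) = (b + t) + 1 by omega, pow_succ]; ring
  have h1 : (X : PowerSeries K) ^ E b (t + 1) * X ^ (n - t) = X ^ (a + 1) * X ^ E b t := by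
    rw [← pow_add, ← pow_add]
    have := E_step b t
    congr 1
    omega
  rw [h2]
  calc -((-1 : PowerSeries K) ^ (b + t)) * X ^ E b (t + 1) * (gb n (t + 1) + X ^ (n - t) * gb n t)
      = -((-1) ^ (b + t)) * X ^ E b (t + 1) * gb n (t + 1)
        + -((-1) ^ (b + t)) * (X ^ E b (t + 1) * X ^ (n - t)) * gb n t := by ring
    _ = -((-1) ^ (b + t)) * X ^ E b (t + 1) * gb n (t + 1)
        + -((-1) ^ (b + t)) * (X ^ (a + 1) * X ^ E b t) * gb n t := by rw [h1]
    _ = _ := by ring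

lemma jcf_key_a0 (b n : ℕ) : jcf b (n + 1) 0 = jcf b n 0 := by
  rw [jcf, jcf, gb_zero_right, gb_zero_right]

/-- the finite Jacobi triple product -/
lemma jtp (a b : ℕ) :
    (∏ j ∈ range a, (1 - Polynomial.C ((X : PowerSeries K) ^ (j + 1)) * Polynomial.X)) *
      (∏ j ∈ range b, (Polynomial.X - Polynomial.C ((X : PowerSeries K) ^ j))) =
    ∑ i ∈ range (a + b + 1), Polynomial.C (jcf b (a + b) i) * Polynomial.X ^ i := by
  induction a with
  | zero =>
    rw [Finset.prod_range_zero, one_mul]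
    induction b with
    | zero =>
      rw [Finset.prod_range_zero, Finset.sum_range_one]
      have h : jcf 0 0 0 = 1 := by
        rw [jcf, gb_zero_right]
        norm_num [E, Tr]
      rw [h]
      norm_num
    | succ b ihb =>
      set n := 0 + b with hn
      rw [Finset.prod_range_succ, ihb]
      have expand : (∑ i ∈ range (n + 1), Polynomial.C (jcf b n i) * Polynomial.X ^ i) *
            (Polynomial.X - Polynomial.C ((X : PowerSeries K) ^ b))
          = (∑ t ∈ range (n + 1), Polynomial.C (jcf b n t) * Polynomial.X ^ (t + 1))
            - ((∑ t ∈ range (n + 1), Polynomial.C ((X : PowerSeries K) ^ b * jcf b n (t + 1)) *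
                Polynomial.X ^ (t + 1)) + Polynomial.C ((X : PowerSeries K) ^ b * jcf b n 0)) := by
        rw [mul_sub, Finset.sum_mul, Finset.sum_mul]
        refine congrArg₂ (· - ·) ?_ ?_
        · refine Finset.sum_congr rfl fun i _ => by rw [pow_succ]; ring
        · -- reindex the second sum
          have : ∀ i ∈ range (n + 1), Polynomial.C (jcf b n i) * Polynomial.X ^ i *
                Polynomial.C ((X : PowerSeries K) ^ b)
              = Polynomial.C ((X : PowerSeries K) ^ b * jcf b n i) * Polynomial.X ^ i := by
            intro i _
            rw [map_mul]; ring
          rw [Finset.sum_congr rfl this, Finset.sum_range_succ'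
            (fun i => Polynomial.C ((X : PowerSeries K) ^ b * jcf b n i) * Polynomial.X ^ i) n]
          refine congrArg₂ (· + ·) ?_ ?_
          · rw [Finset.sum_range_succ, jcf_top, mul_zero, map_zero, zero_mul, add_zero]
          · rw [pow_zero, mul_one]
      rw [expand]
      rw [show 0 + (b + 1) + 1 = (n + 1) + 1 by omega]
      rw [Finset.sum_range_succ' (fun i => Polynomial.C (jcf (b + 1) (0 + (b + 1)) i) *
        Polynomial.X ^ i) (n + 1)]
      rw [show 0 + (b + 1) = n + 1 by omega]
      have step1 : ∀ t ∈ range (n + 1),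
          Polynomial.C (jcf (b + 1) (n + 1) (t + 1)) * Polynomial.X ^ (t + 1)
          = Polynomial.C (jcf b n t) * Polynomial.X ^ (t + 1)
            - Polynomial.C ((X : PowerSeries K) ^ b * jcf b n (t + 1)) * Polynomial.X ^ (t + 1) := by
        intro t _
        rw [jcf_key_b, map_sub, sub_mul]
      rw [Finset.sum_congr rfl step1, Finset.sum_sub_distrib, pow_zero, mul_one, jcf_key_b0,
        map_neg]
      ring
  | succ a iha =>
    set n := a + b with hn
    have hprod : (∏ j ∈ range (a + 1), (1 - Polynomial.C ((X : PowerSeries K) ^ (j + 1)) *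
          Polynomial.X)) * (∏ j ∈ range b, (Polynomial.X - Polynomial.C ((X : PowerSeries K) ^ j)))
        = ((∏ j ∈ range a, (1 - Polynomial.C ((X : PowerSeries K) ^ (j + 1)) * Polynomial.X)) *
          (∏ j ∈ range b, (Polynomial.X - Polynomial.C ((X : PowerSeries K) ^ j)))) *
          (1 - Polynomial.C ((X : PowerSeries K) ^ (a + 1)) * Polynomial.X) := by
      rw [Finset.prod_range_succ]; ring
    rw [hprod, iha]
    have expand : (∑ i ∈ range (n + 1), Polynomial.C (jcf b n i) * Polynomial.X ^ i) *
          (1 - Polynomial.C ((X : PowerSeries K) ^ (a + 1)) * Polynomial.X)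
        = ((∑ t ∈ range (n + 1), Polynomial.C (jcf b n (t + 1)) * Polynomial.X ^ (t + 1))
            + Polynomial.C (jcf b n 0))
          - (∑ t ∈ range (n + 1), Polynomial.C ((X : PowerSeries K) ^ (a + 1) * jcf b n t) *
              Polynomial.X ^ (t + 1)) := by
      rw [mul_sub, mul_one, Finset.sum_mul]
      refine congrArg₂ (· - ·) ?_ ?_
      · rw [Finset.sum_range_succ' (fun i => Polynomial.C (jcf b n i) * Polynomial.X ^ i) n]
        refine congrArg₂ (· + ·) ?_ ?_
        rw [Finset.sum_range_succ, jcf_top, map_zero, zero_mul, add_zero]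
        rw [pow_zero, mul_one]
      · refine Finset.sum_congr rfl fun i _ => ?_
        rw [map_mul, pow_succ]; ring
    rw [expand]
    rw [show a + 1 + b + 1 = (n + 1) + 1 by omega]
    rw [Finset.sum_range_succ' (fun i => Polynomial.C (jcf b (a + 1 + b) i) * Polynomial.X ^ i)
      (n + 1)]
    rw [show a + 1 + b = n + 1 by omega]
    have step1 : ∀ t ∈ range (n + 1),
        Polynomial.C (jcf b (n + 1) (t + 1)) * Polynomial.X ^ (t + 1)
        = Polynomial.C (jcf b n (t + 1)) * Polynomial.X ^ (t + 1)
          - Polynomial.C ((X : PowerSeries K) ^ (a + 1) * jcf b n t) * Polynomial.X ^ (t + 1) := by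
      intro t ht
      rw [Finset.mem_range] at ht
      rw [jcf_key_a a b n t hn (by omega), map_sub, sub_mul]
    rw [Finset.sum_congr rfl step1, Finset.sum_sub_distrib, pow_zero, mul_one, jcf_key_a0]
    ring

end
end Ram7
namespace Ram7
noncomputable section
open Finset PowerSeries

lemma Tr_ge (k : ℕ) : k ≤ Tr k := by
  induction k with
  | zero => simp [Tr]
  | succ k ih => rw [Tr_succ]; omega

lemma Tr_strictMono : StrictMono Tr := strictMono_nat_of_lt_succ fun k => by rw [Tr_succ]; omega

/-- Identity A: the derivative of the finite JTP at z = 1. -/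
lemma idA (s : ℕ) :
    Fe (s + 1) * Fe s =
      ∑ i ∈ range (2 * s + 3), jcf (s + 1) (2 * s + 2) i * (i : PowerSeries K) := by
  have h := jtp (s + 1) (s + 1)
  rw [Finset.prod_range_succ'
    (fun j => Polynomial.X - Polynomial.C ((X : PowerSeries K) ^ j)) s] at h
  rw [pow_zero, map_one, ← mul_assoc] at h
  -- now h : (A * P') * (Z - 1) = ∑ ...
  have h2 := congrArg (fun p => Polynomial.eval 1 (Polynomial.derivative p)) h
  simp only [Polynomial.derivative_mul, Polynomial.derivative_sub, Polynomial.derivative_X,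
    Polynomial.derivative_one, sub_zero, mul_one, Polynomial.eval_add, Polynomial.eval_mul,
    Polynomial.eval_sub, Polynomial.eval_X, Polynomial.eval_one, sub_self, mul_zero,
    zero_add] at h2
  rw [show (2 * s + 3) = (s + 1) + (s + 1) + 1 by omega,
    show (2 * s + 2) = (s + 1) + (s + 1) by omega]
  have hR : Polynomial.eval 1 (Polynomial.derivative
        (∑ i ∈ range (s + 1 + (s + 1) + 1),
          Polynomial.C (jcf (s + 1) (s + 1 + (s + 1)) i) * Polynomial.X ^ i))
      = ∑ i ∈ range (s + 1 + (s + 1) + 1),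
          jcf (s + 1) (s + 1 + (s + 1)) i * (i : PowerSeries K) := by
    rw [map_sum, Polynomial.eval_finset_sum]
    refine Finset.sum_congr rfl fun i _ => ?_
    rw [Polynomial.derivative_C_mul, Polynomial.derivative_X_pow, Polynomial.eval_mul,
      Polynomial.eval_C, Polynomial.eval_mul, Polynomial.eval_C, Polynomial.eval_pow,
      Polynomial.eval_X, one_pow, mul_one]
  rw [← hR, ← h2]
  rw [Polynomial.eval_prod, Polynomial.eval_prod]
  have e1 : ∀ j : ℕ, Polynomial.eval 1
      (1 - Polynomial.C ((X : PowerSeries K) ^ (j + 1)) * Polynomial.X) = 1 - X ^ (j + 1) := by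
    intro j
    rw [Polynomial.eval_sub, Polynomial.eval_one, Polynomial.eval_mul, Polynomial.eval_C,
      Polynomial.eval_X, mul_one]
  have e2 : ∀ j : ℕ, Polynomial.eval 1
      (Polynomial.X - Polynomial.C ((X : PowerSeries K) ^ (j + 1))) = 1 - X ^ (j + 1) := by
    intro j
    rw [Polynomial.eval_sub, Polynomial.eval_X, Polynomial.eval_C]
  rw [Finset.prod_congr rfl fun j _ => e1 j, Finset.prod_congr rfl fun j _ => e2 j, Fe, Fe]

/-- coefficient of a product with X^k -/
lemma coeff_X_pow_mul' (k N : ℕ) (φ : PowerSeries K) :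
    coeff (R := K) N (X ^ k * φ) = if k ≤ N then coeff (R := K) (N - k) φ else 0 := by
  rcases le_or_gt k N with h | h
  · obtain ⟨d, rfl⟩ : ∃ d, N = d + k := ⟨N - k, by omega⟩
    rw [if_pos h, PowerSeries.coeff_X_pow_mul, show d + k - k = d by omega]
  · rw [if_neg (by omega), coeff_mul, Finset.sum_eq_zero]
    rintro ⟨p1, p2⟩ hp
    rw [Finset.HasAntidiagonal.mem_antidiagonal] at hp
    simp only
    rw [coeff_X_pow, if_neg (by omega), zero_mul]

lemma coeff_jcf (b n i N : ℕ) :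
    coeff (R := K) N (jcf b n i) =
      (-1 : K) ^ (b + i) * (if E b i ≤ N then coeff (R := K) (N - E b i) (gb n i) else 0) := by
  have hneg : ((-1 : PowerSeries K)) = C (R := K) (-1) := by rw [map_neg, map_one]
  rw [jcf, hneg, ← map_pow, mul_assoc, PowerSeries.coeff_C_mul, coeff_X_pow_mul']

def pa (M : ℕ) : K := (Fintype.card (Nat.Partition M) : K)

def jterm (N k : ℕ) : K :=
  if Tr k ≤ N then (-1 : K) ^ k * ((2 * k + 1 : ℕ) : K) * pa (N - Tr k) else 0

/-- Identity B : low coefficients of `Fe (s+1) * Fe s` -/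
lemma idB (s N : ℕ) (hN : N ≤ s) :
    coeff (R := K) N (Fe (s + 1) * Fe s) = ∑ k ∈ range (N + 1), jterm N k := by
  rw [idA s, map_sum]
  set f : ℕ → K := fun i => coeff (R := K) N (jcf (s + 1) (2 * s + 2) i * (i : PowerSeries K)) with hf
  have hsplit : ∑ i ∈ range (2 * s + 3), f i
      = (∑ i ∈ range (s + 1), f i) + ∑ k ∈ range (s + 2), f (s + 1 + k) := by
    rw [show 2 * s + 3 = (s + 1) + (s + 2) by omega, Finset.sum_range_add]
  have hrefl : ∑ i ∈ range (s + 1), f i = ∑ k ∈ range (s + 1), f (s - k) := by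
    rw [← Finset.sum_range_reflect]
    exact Finset.sum_congr rfl fun k hk => by rw [show s + 1 - 1 - k = s - k by omega]
  -- evaluate f (s + 1 + k)
  have hg1 : ∀ k, k ≤ s + 1 → f (s + 1 + k) =
      ((s + 1 + k : ℕ) : K) * ((-1 : K) ^ k *
        (if Tr k ≤ N then pa (N - Tr k) else 0)) := by
    intro k hk
    rw [hf]
    simp only
    rw [show ((s + 1 + k : ℕ) : PowerSeries K) = C (R := K) ((s + 1 + k : ℕ) : K) by
      rw [map_natCast]]
    rw [PowerSeries.coeff_mul_C, coeff_jcf]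
    have hE : E (s + 1) (s + 1 + k) = Tr k := by
      rw [E, if_pos (by omega), show s + 1 + k - (s + 1) = k by omega]
    have hsign : (-1 : K) ^ (s + 1 + (s + 1 + k)) = (-1 : K) ^ k := by
      rw [show s + 1 + (s + 1 + k) = 2 * (s + 1) + k by omega, pow_add, pow_mul]
      norm_num
    rw [hE, hsign]
    rcases le_or_gt (Tr k) N with h | h
    · rw [if_pos h, if_pos h]
      rw [coeff_gb (2 * s + 2) (s + 1 + k) (N - Tr k) (by omega)
        (by omega) (by have := Tr_ge k; omega)]
      rw [pa]; ring
    · rw [if_neg (by omega), if_neg (by omega)]; ring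
  -- evaluate f (s - k)
  have hg2 : ∀ k, k ≤ s → f (s - k) =
      -(((s - k : ℕ) : K) * ((-1 : K) ^ k *
        (if Tr k ≤ N then pa (N - Tr k) else 0))) := by
    intro k hk
    rw [hf]
    simp only
    rw [show ((s - k : ℕ) : PowerSeries K) = C (R := K) ((s - k : ℕ) : K) by rw [map_natCast]]
    rw [PowerSeries.coeff_mul_C, coeff_jcf]
    have hE : E (s + 1) (s - k) = Tr k := by
      rw [E, if_neg (by omega), show s + 1 - (s - k) - 1 = k by omega]
    have hsign : (-1 : K) ^ (s + 1 + (s - k)) = -(-1 : K) ^ k := by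
      have h2 : s + 1 + (s - k) = 2 * (s - k) + (k + 1) := by omega
      rw [h2, pow_add, pow_mul]
      norm_num [pow_succ]
    rw [hE, hsign]
    rcases le_or_gt (Tr k) N with h | h
    · rw [if_pos h, if_pos h]
      rw [coeff_gb (2 * s + 2) (s - k) (N - Tr k) (by omega)
        (by have := Tr_ge k; omega) (by omega)]
      rw [pa]; ring
    · rw [if_neg (by omega), if_neg (by omega)]; ring
  rw [hsplit, hrefl]
  rw [Finset.sum_congr rfl fun k hk => hg2 k (by rw [Finset.mem_range] at hk; omega),
    Finset.sum_congr rfl fun k hk => hg1 k (by rw [Finset.mem_range] at hk; omega)]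
  -- extend the g2 sum to range (s+2) : extra term k = s+1 vanishes
  have hext : ∑ k ∈ range (s + 1), -(((s - k : ℕ) : K) * ((-1 : K) ^ k *
        (if Tr k ≤ N then pa (N - Tr k) else 0)))
      = ∑ k ∈ range (s + 2), -(((s - k : ℕ) : K) * ((-1 : K) ^ k *
        (if Tr k ≤ N then pa (N - Tr k) else 0))) := by
    have hT : Tr (s + 1) > N := by have := Tr_ge (s + 1); omega
    rw [Finset.sum_range_succ (fun k => -(((s - k : ℕ) : K) * ((-1 : K) ^ k *
      (if Tr k ≤ N then pa (N - Tr k) else 0)))) (s + 1)]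
    rw [if_neg (show ¬ Tr (s + 1) ≤ N by omega)]
    ring
  rw [hext, ← Finset.sum_add_distrib]
  -- combine termwise
  have hcomb : ∀ k ∈ range (s + 2),
      (-(((s - k : ℕ) : K) * ((-1 : K) ^ k * (if Tr k ≤ N then pa (N - Tr k) else 0)))
        + ((s + 1 + k : ℕ) : K) * ((-1 : K) ^ k * (if Tr k ≤ N then pa (N - Tr k) else 0)))
      = jterm N k := by
    intro k hk
    rw [Finset.mem_range] at hk
    rw [jterm]
    rcases le_or_gt (Tr k) N with h | h
    · rw [if_pos h, if_pos h]
      have hks : k ≤ s := by have := Tr_ge k; omega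
      have hc : ((s + 1 + k : ℕ) : K) - ((s - k : ℕ) : K) = ((2 * k + 1 : ℕ) : K) := by
        rw [← Nat.cast_sub (by omega : s - k ≤ s + 1 + k), show s + 1 + k - (s - k) = 2 * k + 1 by omega]
      calc -(((s - k : ℕ) : K) * ((-1 : K) ^ k * pa (N - Tr k)))
            + ((s + 1 + k : ℕ) : K) * ((-1 : K) ^ k * pa (N - Tr k))
          = (((s + 1 + k : ℕ) : K) - ((s - k : ℕ) : K)) * ((-1 : K) ^ k * pa (N - Tr k)) := by
            ring
        _ = (-1 : K) ^ k * ((2 * k + 1 : ℕ) : K) * pa (N - Tr k) := by rw [hc]; ring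
    · rw [if_neg (by omega), if_neg (by omega)]; ring
  rw [Finset.sum_congr rfl hcomb]
  -- restrict to range (N + 1)
  symm
  apply Finset.sum_subset
  · intro k hk
    rw [Finset.mem_range] at *
    omega
  · intro k _ hk
    rw [Finset.mem_range] at hk
    rw [jterm, if_neg (by have := Tr_ge k; omega)]

end
end Ram7
namespace Ram7
noncomputable section
open Finset PowerSeries

/-- the coefficients of Jacobi's cube -/
def jc (x : ℕ) : K :=
  ∑ k ∈ range (x + 1), if Tr k = x then (-1 : K) ^ k * ((2 * k + 1 : ℕ) : K) else 0

lemma jc_tri (j : ℕ) : jc (Tr j) = (-1 : K) ^ j * ((2 * j + 1 : ℕ) : K) := by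
  rw [jc, Finset.sum_eq_single j]
  · rw [if_pos rfl]
  · intro k _ hkj
    rw [if_neg (fun h => hkj (Tr_strictMono.injective h))]
  · intro hj
    exact absurd (Finset.mem_range.2 (by have := Tr_ge j; omega)) hj

lemma jc_of_not_tri (x : ℕ) (h : ∀ k, Tr k ≠ x) : jc x = 0 := by
  rw [jc, Finset.sum_eq_zero]
  intro k _
  rw [if_neg (h k)]

lemma coeff_Fe_stab (s c : ℕ) (hc : c ≤ s) : coeff (R := K) c (Fe (s + 1)) = coeff (R := K) c (Fe s) := by
  rw [Fe_succ, mul_sub, mul_one, map_sub, mul_comm, coeff_X_pow_mul', if_neg (by omega),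
    sub_zero]

/-- Jacobi cube identity, coefficientwise -/
lemma jac (s x : ℕ) (hx : x ≤ s) : coeff (R := K) x (Fe (s + 1) ^ 3) = jc x := by
  have h3 : Fe (s + 1) ^ 3 = Fe (s + 1) * Fe (s + 1) * Fe (s + 1) := by ring
  have hA : ∀ c ≤ x, coeff (R := K) c (Fe (s + 1) * Fe (s + 1)) =
      coeff (R := K) c (Fe (s + 1) * Fe s) :=
    fun c hc => coeff_mul_congr' (fun d hd => coeff_Fe_stab s d (by omega))
  rw [h3, coeff_mul_congr hA, coeff_mul]
  have hterm : ∀ p ∈ antidiagonal x,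
      coeff (R := K) p.1 (Fe (s + 1) * Fe s) * coeff (R := K) p.2 (Fe (s + 1))
      = ∑ k ∈ range (x + 1), jterm p.1 k * coeff (R := K) p.2 (Fe (s + 1)) := by
    rintro ⟨p1, p2⟩ hp
    rw [Finset.HasAntidiagonal.mem_antidiagonal] at hp
    simp only
    rw [idB s p1 (by omega), Finset.sum_mul]
    apply Finset.sum_subset
    · intro k hk
      rw [Finset.mem_range] at *
      omega
    · intro k _ hk
      rw [Finset.mem_range] at hk
      rw [jterm, if_neg (by have := Tr_ge k; omega), zero_mul]
  rw [Finset.sum_congr rfl hterm, Finset.sum_comm]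
  have hinner : ∀ k ∈ range (x + 1),
      ∑ p ∈ antidiagonal x, jterm p.1 k * coeff (R := K) p.2 (Fe (s + 1))
      = (-1 : K) ^ k * ((2 * k + 1 : ℕ) : K) * (if Tr k = x then 1 else 0) := by
    intro k hk
    rw [Finset.mem_range] at hk
    have hterm2 : ∀ p ∈ antidiagonal x, jterm p.1 k * coeff (R := K) p.2 (Fe (s + 1))
        = (-1 : K) ^ k * ((2 * k + 1 : ℕ) : K) *
          (coeff (R := K) p.1 (X ^ Tr k * Pp) * coeff (R := K) p.2 (Fe (s + 1))) := by
      rintro ⟨p1, p2⟩ _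
      simp only
      rw [coeff_X_pow_mul', jterm]
      rcases le_or_gt (Tr k) p1 with h | h
      · rw [if_pos h, if_pos h, Pp, coeff_mk, pa]; ring
      · rw [if_neg (by omega), if_neg (by omega)]; ring
    rw [Finset.sum_congr rfl hterm2, ← Finset.mul_sum, ← coeff_mul,
      mul_assoc (X ^ Tr k : PowerSeries K) Pp (Fe (s + 1)), coeff_X_pow_mul']
    rcases le_or_gt (Tr k) x with h | h
    · rw [if_pos h, euler (s + 1) (x - Tr k) (by omega)]
      rcases eq_or_ne (Tr k) x with rfl | hne
      · rw [if_pos (by omega), if_pos rfl]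
      · rw [if_neg (by omega), if_neg hne]
    · rw [if_neg (by omega), if_neg (by omega)]
  rw [Finset.sum_congr rfl hinner, jc]
  refine Finset.sum_congr rfl fun k _ => ?_
  rcases eq_or_ne (Tr k) x with h | h
  · rw [if_pos h, if_pos h, mul_one]
  · rw [if_neg h, if_neg h, mul_zero]

lemma two_Tr (k : ℕ) : 2 * Tr k = k * (k + 1) := by
  have h2 : 2 ∣ k * (k + 1) := (Nat.even_mul_succ_self k).two_dvd
  rw [Tr]
  omega

lemma key_arith (j k : ℕ) (h : (Tr j + Tr k) % 7 = 5) :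
    ((2 * j + 1 : ℕ) : K) * ((2 * k + 1 : ℕ) : K) = 0 := by
  have hj : (2 * j + 1) * (2 * j + 1) = 4 * (2 * Tr j) + 1 := by rw [two_Tr]; ring
  have hk : (2 * k + 1) * (2 * k + 1) = 4 * (2 * Tr k) + 1 := by rw [two_Tr]; ring
  have h1 : (2 * j + 1) * (2 * j + 1) + (2 * k + 1) * (2 * k + 1)
      = 8 * (Tr j + Tr k) + 2 := by omega
  have hc : ((2 * j + 1 : ℕ) : K) * ((2 * j + 1 : ℕ) : K)
      + ((2 * k + 1 : ℕ) : K) * ((2 * k + 1 : ℕ) : K) = 0 := by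
    have h42 : ((8 * (Tr j + Tr k) + 2 : ℕ) : K) = 0 := by
      have hm : (8 * (Tr j + Tr k) + 2) % 7 = 0 := by omega
      rw [← ZMod.natCast_mod, hm, Nat.cast_zero]
    rw [← Nat.cast_mul, ← Nat.cast_mul, ← Nat.cast_add, h1, h42]
  exact (show ∀ u v : K, u * u + v * v = 0 → u * v = 0 by decide)
    ((2 * j + 1 : ℕ) : K) ((2 * k + 1 : ℕ) : K) hc

lemma jc_mul (x y : ℕ) (h : (x + y) % 7 = 5) : jc x * jc y = 0 := by
  by_cases hx : ∃ j, Tr j = x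
  · obtain ⟨j, rfl⟩ := hx
    by_cases hy : ∃ k, Tr k = y
    · obtain ⟨k, rfl⟩ := hy
      rw [jc_tri, jc_tri]
      have h0 := key_arith j k h
      calc (-1 : K) ^ j * ((2 * j + 1 : ℕ) : K) * ((-1 : K) ^ k * ((2 * k + 1 : ℕ) : K))
          = (-1 : K) ^ j * (-1 : K) ^ k * (((2 * j + 1 : ℕ) : K) * ((2 * k + 1 : ℕ) : K)) := by
            ring
        _ = 0 := by rw [h0, mul_zero]
    · rw [jc_of_not_tri y (fun k hk => hy ⟨k, hk⟩), mul_zero]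
  · rw [jc_of_not_tri x (fun k hk => hx ⟨k, hk⟩), zero_mul]

lemma key6 (s a : ℕ) (ha : a % 7 = 5) (has : a ≤ s) : coeff (R := K) a (Fe (s + 1) ^ 6) = 0 := by
  have h : Fe (s + 1) ^ 6 = Fe (s + 1) ^ 3 * Fe (s + 1) ^ 3 := by ring
  rw [h, coeff_mul, Finset.sum_eq_zero]
  rintro ⟨p1, p2⟩ hp
  rw [Finset.HasAntidiagonal.mem_antidiagonal] at hp
  simp only
  rw [jac s p1 (by omega), jac s p2 (by omega)]
  exact jc_mul p1 p2 (by omega)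

end
end Ram7
namespace Ram7
noncomputable section
open Finset PowerSeries Theorems100

instance : CharP (PowerSeries K) 7 := by
  constructor
  intro x
  rw [← map_natCast (C (R := K)) x]
  rw [show ((C (R := K)) ((x : ℕ) : K) = 0) ↔ (((x : ℕ) : K) = 0) from
    ⟨fun h => by simpa using congrArg (constantCoeff (R := K)) h, fun h => by rw [h, map_zero]⟩]
  exact CharP.cast_eq_zero_iff K 7 x

lemma Fe_pow_7 (M : ℕ) :
    (Fe M) ^ 7 = ∏ i ∈ range M, (1 - (X : PowerSeries K) ^ (7 * (i + 1))) := by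
  rw [Fe, ← Finset.prod_pow]
  refine Finset.prod_congr rfl fun i _ => ?_
  rw [sub_pow_char, one_pow, ← pow_mul, mul_comm (i + 1) 7]

/-- the inverse of `(Fe M)^7` (a product of inverses) -/
def De (M : ℕ) : PowerSeries K := ∏ i ∈ range M, ((1 : PowerSeries K) - X ^ (7 * (i + 1)))⁻¹

lemma Fe7_mul_De (M : ℕ) : (Fe M) ^ 7 * De M = 1 := by
  rw [Fe_pow_7, De, ← Finset.prod_mul_distrib]
  apply Finset.prod_eq_one
  intro i _
  apply PowerSeries.mul_inv_cancel
  rw [map_sub, map_one, map_pow, constantCoeff_X, zero_pow (by omega), sub_zero]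
  exact one_ne_zero

lemma coeff_De (M b : ℕ) (hb : ¬ 7 ∣ b) : coeff (R := K) b (De M) = 0 := by
  classical
  have hfac : ∀ i : ℕ, ((1 : PowerSeries K) - X ^ (7 * (i + 1)))⁻¹
      = indicatorSeries K {k | (7 * i + 6) + 1 ∣ k} := by
    intro i
    rw [show 7 * (i + 1) = (7 * i + 6) + 1 by omega]
    exact Theorems100.num_series' (7 * i + 6)
  rw [De, Finset.prod_congr rfl fun i _ => hfac i, PowerSeries.coeff_prod,
    Finset.sum_eq_zero]
  intro l hl
  rw [Finset.mem_finsuppAntidiag] at hl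
  by_cases hall : ∀ i ∈ range M, (7 * i + 6) + 1 ∣ l i
  · exfalso
    apply hb
    rw [← hl.1]
    apply Finset.dvd_sum
    intro i hi
    exact dvd_trans ⟨i + 1, by ring⟩ (hall i hi)
  · push_neg at hall
    obtain ⟨i0, hi0, hnd⟩ := hall
    apply Finset.prod_eq_zero hi0
    exact Theorems100.coeff_indicator_neg _ _ hnd

lemma main (a : ℕ) (ha : a % 7 = 5) : (Fintype.card (Nat.Partition a) : K) = 0 := by
  set M := a + 1 with hM
  have hcc : constantCoeff (R := K) ((Fe M) ^ 7) ≠ 0 := by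
    rw [map_pow]
    exact pow_ne_zero _ (constCoeff_Fe M)
  have hstep : (Fintype.card (Nat.Partition a) : K)
      = coeff (R := K) a ((Pp * Fe M * (Fe M) ^ 6) * ((Fe M) ^ 7)⁻¹) := by
    have h1 : Pp * Fe M * (Fe M) ^ 6 * ((Fe M) ^ 7)⁻¹
        = Pp * ((Fe M) ^ 7 * ((Fe M) ^ 7)⁻¹) := by ring
    rw [h1, PowerSeries.mul_inv_cancel _ hcc, mul_one, Pp, coeff_mk]
  rw [hstep, coeff_mul, Finset.sum_eq_zero]
  rintro ⟨p1, p2⟩ hp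
  rw [Finset.HasAntidiagonal.mem_antidiagonal] at hp
  simp only
  by_cases h7 : 7 ∣ p2
  · have hp1 : p1 % 7 = 5 := by omega
    have hz : coeff (R := K) p1 (Pp * Fe M * (Fe M) ^ 6) = 0 := by
      rw [mul_assoc, mul_comm (Fe M), ← mul_assoc, mul_assoc, mul_comm ((Fe M) ^ 6),
        ← mul_assoc, coeff_mul, Finset.sum_eq_zero]
      rintro ⟨u, v⟩ huv
      rw [Finset.HasAntidiagonal.mem_antidiagonal] at huv
      simp only
      rw [euler M u (by omega)]
      rcases eq_or_ne u 0 with rfl | hu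
      · rw [if_pos rfl, one_mul]
        have hv : v = p1 := by omega
        subst hv
        exact key6 a v hp1 (by omega)
      · rw [if_neg hu, zero_mul]
    rw [hz, zero_mul]
  · have hz : coeff (R := K) p2 (((Fe M) ^ 7)⁻¹) = 0 := by
      have hinv : ((Fe M) ^ 7)⁻¹ = De M := by
        symm
        rw [PowerSeries.eq_inv_iff_mul_eq_one hcc, mul_comm]
        exact Fe7_mul_De M
      rw [hinv]
      exact coeff_De M p2 h7
    rw [hz, mul_zero]

end
end Ram7

theorem stmt_7 (n : ℕ) :
    Fintype.card (Nat.Partition (7 * n + 5)) % 7 = 0 := by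
  have h := Ram7.main (7 * n + 5) (by omega)
  have h7 : (7 : ℕ) ∣ Fintype.card (Nat.Partition (7 * n + 5)) :=
    (ZMod.natCast_eq_zero_iff _ 7).mp h
  omega
end

section
/- For every positive integer n, p(n) = Σ_{j ≥ 1} (−1)^{j−1} [ p(n − j(3j−1)/2) + p(n − j(3j+1)/2) ], where terms with negative argument are interpreted as 0. -/
/-- The partition function extended to the integers: `pz m` is the number of
partitions of `m` when `m ≥ 0`, and `0` when `m < 0`. -/
def pz (m : ℤ) : ℤ :=
  if 0 ≤ m then (Fintype.card (Nat.Partition m.toNat) : ℤ) else 0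

namespace PentAux
open Multiset

/-- generalized pentagonal numbers on ℤ -/
def gp (j : ℤ) : ℤ := j * (3 * j - 1) / 2

lemma two_gp (j : ℤ) : 2 * gp j = j * (3 * j - 1) := by
  have h : (2:ℤ) ∣ j * (3 * j - 1) := by
    rcases Int.even_or_odd j with ⟨k, hk⟩ | ⟨k, hk⟩
    · exact ⟨k * (3 * j - 1), by rw [hk]; ring⟩
    · exact ⟨j * (3 * k + 1), by rw [hk]; ring⟩
  rw [gp, Int.mul_ediv_cancel' h]

lemma gp_succ (j : ℤ) : gp (j + 1) = gp j + 3 * j + 1 := by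
  have h1 := two_gp j; have h2 := two_gp (j + 1)
  have : 2 * gp (j+1) = 2 * gp j + 2 * (3 * j + 1) := by rw [h1, h2]; ring
  omega

lemma gp_pred (j : ℤ) : gp (j - 1) = gp j - 3 * j + 2 := by
  have h := gp_succ (j - 1)
  rw [sub_add_cancel] at h; omega

lemma abs_le_gp (j : ℤ) : |j| ≤ gp j := by
  have h := two_gp j
  rcases abs_cases j with ⟨h1, h2⟩ | ⟨h1, h2⟩ <;> rw [h1] <;>
    nlinarith [sq_nonneg (j - 1), sq_nonneg (j + 1), sq_nonneg j]

lemma gp_nonneg (j : ℤ) : 0 ≤ gp j := le_trans (abs_nonneg j) (abs_le_gp j)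

lemma gp_zero : gp 0 = 0 := rfl

/-- sup of a nonempty multiset of naturals is attained -/
lemma sup_mem {M : Multiset ℕ} (h : M ≠ 0) : M.sup ∈ M := by
  induction M using Multiset.induction with
  | empty => exact absurd rfl h
  | cons a s ih =>
    rw [sup_cons]
    rcases eq_or_ne s 0 with rfl | hs
    · simp
    · rcases le_total a s.sup with hle | hle
      · rw [sup_eq_right.2 hle]; exact mem_cons_of_mem (ih hs)
      · rw [sup_eq_left.2 hle]; exact mem_cons_self a s

lemma sum_filter_pos (K : Multiset ℕ) : (K.filter (0 < ·)).sum = K.sum := by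
  conv_rhs => rw [← filter_add_not (0 < ·) K]
  rw [sum_add]
  have : (K.filter (fun a => ¬ 0 < a)).sum = 0 := by
    apply Multiset.sum_eq_zero
    intro x hx
    have := (mem_filter.1 hx).2
    omega
  omega

lemma sum_map_succ (K : Multiset ℕ) : (K.map (· + 1)).sum = K.sum + Multiset.card K := by
  induction K using Multiset.induction with
  | empty => simp
  | cons a s ih => simp [ih]; ring

lemma sum_map_pred {M : Multiset ℕ} (h : ∀ i ∈ M, i ≠ 0) :
    (M.map (· - 1)).sum + Multiset.card M = M.sum := by
  have : (M.map (· - 1)).map (· + 1) = M := by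
    rw [map_map]
    have : M.map ((· + 1) ∘ (· - 1)) = M.map id := by
      apply map_congr rfl
      intro x hx
      have := h x hx
      simp only [Function.comp_apply, id_eq]
      omega
    rw [this, map_id]
  conv_rhs => rw [← this]
  rw [sum_map_succ, card_map]

end PentAux

namespace PentAux2
open Multiset PentAux

/-- Case A of the Bressoud–Zeilberger involution: `j ↦ j+1`. -/
def phiA (j : ℤ) (M : Multiset ℕ) : ℤ × Multiset ℕ :=
  (j + 1,
    if M = 0 then Multiset.replicate (-3 * j - 1).toNat 1
    else (M.erase M.sup).map (· + 1) +
      Multiset.replicate ((M.sup : ℤ) - Multiset.card M - 3 * j).toNat 1)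

/-- Case B of the Bressoud–Zeilberger involution: `j ↦ j-1`. -/
def phiB (j : ℤ) (M : Multiset ℕ) : ℤ × Multiset ℕ :=
  (j - 1, (((Multiset.card M : ℤ) + 3 * j - 2).toNat ::ₘ M.map (· - 1)).filter (0 < ·))

/-- The Bressoud–Zeilberger involution. -/
def phi (x : ℤ × Multiset ℕ) : ℤ × Multiset ℕ :=
  if (Multiset.card x.2 : ℤ) + 3 * x.1 ≤ (x.2.sup : ℤ) then phiA x.1 x.2 else phiB x.1 x.2

/-- all partitions (as multisets) of numbers up to `n` -/
def allP (n : ℕ) : Finset (Multiset ℕ) :=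
  (Finset.range (n + 1)).biUnion fun m =>
    (Finset.univ : Finset (Nat.Partition m)).image Nat.Partition.parts

lemma mem_allP {n : ℕ} {M : Multiset ℕ} :
    M ∈ allP n ↔ M.sum ≤ n ∧ ∀ i ∈ M, i ≠ 0 := by
  constructor
  · intro h
    rcases Finset.mem_biUnion.1 h with ⟨m, hm, hM⟩
    rcases Finset.mem_image.1 hM with ⟨P, _, rfl⟩
    refine ⟨?_, fun i hi => (P.parts_pos hi).ne'⟩
    rw [P.parts_sum]
    exact Nat.lt_succ_iff.1 (Finset.mem_range.1 hm)
  · rintro ⟨h1, h2⟩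
    refine Finset.mem_biUnion.2 ⟨M.sum, Finset.mem_range.2 (Nat.lt_succ_of_le h1), ?_⟩
    exact Finset.mem_image.2 ⟨⟨M, fun hi => Nat.pos_of_ne_zero (h2 _ hi), rfl⟩,
      Finset.mem_univ _, rfl⟩

/-- the finset of pairs `(j, λ)` with `λ` a partition of `n - gp j` -/
noncomputable def S (n : ℕ) : Finset (ℤ × Multiset ℕ) :=
  ((Finset.Icc (-(n : ℤ) - 1) ((n : ℤ) + 1)) ×ˢ allP n).filter fun x =>
    ((x.2.sum : ℤ) = (n : ℤ) - gp x.1 ∧ ∀ i ∈ x.2, i ≠ 0)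

lemma mem_S {n : ℕ} {x : ℤ × Multiset ℕ} :
    x ∈ S n ↔ ((x.2.sum : ℤ) = (n : ℤ) - gp x.1 ∧ ∀ i ∈ x.2, i ≠ 0) := by
  rw [S, Finset.mem_filter, Finset.mem_product, and_iff_right_iff_imp]
  rintro ⟨h1, h2⟩
  have hgp : gp x.1 ≤ (n : ℤ) := by have : (0:ℤ) ≤ x.2.sum := Int.natCast_nonneg _; omega
  have habs := abs_le_gp x.1
  constructor
  · rw [Finset.mem_Icc]
    rcases abs_cases x.1 with ⟨e1, _⟩ | ⟨e1, _⟩ <;> omega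
  · rw [mem_allP]
    refine ⟨?_, h2⟩
    have := gp_nonneg x.1
    omega

end PentAux2

namespace PentAux2
open Multiset PentAux

lemma sup_replicate_one (k : ℕ) (hk : 1 ≤ k) : (Multiset.replicate k 1).sup = 1 := by
  apply le_antisymm
  · exact Multiset.sup_le.2 fun b hb => le_of_eq (Multiset.eq_of_mem_replicate hb)
  · exact Multiset.le_sup (Multiset.mem_replicate.2 ⟨by omega, rfl⟩)

lemma phi_eqA {j : ℤ} {M : Multiset ℕ} (h : (Multiset.card M : ℤ) + 3 * j ≤ (M.sup : ℤ)) :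
    phi (j, M) = phiA j M := if_pos h

lemma phi_eqB {j : ℤ} {M : Multiset ℕ} (h : ¬ ((Multiset.card M : ℤ) + 3 * j ≤ (M.sup : ℤ))) :
    phi (j, M) = phiB j M := if_neg h

lemma phi_good {n : ℕ} (hn : 1 ≤ n) {x : ℤ × Multiset ℕ} (hx : x ∈ S n) :
    phi x ∈ S n ∧ phi (phi x) = x ∧ ((phi x).1 = x.1 + 1 ∨ (phi x).1 = x.1 - 1) := by
  obtain ⟨j, M⟩ := x
  rw [mem_S] at hx
  obtain ⟨hsum, hpos⟩ := hx
  simp only at hsum hpos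
  by_cases hc : (Multiset.card M : ℤ) + 3 * j ≤ (M.sup : ℤ)
  · -- CASE A
    have hphi : phi (j, M) = phiA j M := by rw [phi, if_pos hc]
    by_cases hM0 : M = 0
    · -- A, empty partition
      have hsum0 : M.sum = 0 := by rw [hM0]; rfl
      have hgpj : gp j = (n : ℤ) := by rw [hsum0] at hsum; push_cast at hsum; omega
      have hj0 : j ≠ 0 := by rintro rfl; rw [gp_zero] at hgpj; omega
      have hjneg : j ≤ -1 := by
        rw [hM0] at hc
        simp only [Multiset.card_zero, Nat.cast_zero, Multiset.sup_zero, zero_add] at hc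
        have hb : (⊥ : ℕ) = 0 := rfl
        rw [hb] at hc; push_cast at hc; omega
      set k : ℕ := (-3*j-1).toNat with hk
      have hkz : (k : ℤ) = -3*j-1 := Int.toNat_of_nonneg (by omega)
      have hk1 : 1 ≤ k := by omega
      have hA : phi (j, M) = (j + 1, Multiset.replicate k 1) := by
        rw [hphi, phiA, if_pos hM0]
      refine ⟨?_, ?_, ?_⟩
      · rw [hA, mem_S]
        constructor
        · simp only [Multiset.sum_replicate, smul_eq_mul, mul_one]
          rw [gp_succ]; omega
        · intro i hi
          rw [Multiset.eq_of_mem_replicate hi]; omega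
      · rw [hA, phi]
        have hsup : (Multiset.replicate k 1).sup = 1 := sup_replicate_one k hk1
        rw [if_neg (by rw [hsup]; simp only [Multiset.card_replicate]; push_cast; omega)]
        rw [phiB]
        have h1 : ((Multiset.card (Multiset.replicate k 1) : ℤ) + 3*(j+1) - 2).toNat = 0 := by
          simp only [Multiset.card_replicate]; omega
        rw [h1]
        have h2 : (Multiset.replicate k 1).map (· - 1) = Multiset.replicate k 0 :=
          Multiset.map_replicate _ k 1
        rw [h2]
        have h3 : ((0 ::ₘ Multiset.replicate k 0).filter (0 < ·)) = 0 := by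
          rw [Multiset.filter_eq_nil]
          intro a ha
          rcases Multiset.mem_cons.1 ha with rfl | ha
          · omega
          · rw [Multiset.eq_of_mem_replicate ha]; omega
        rw [h3, hM0]
        simp only [Prod.mk.injEq, add_sub_cancel_right, and_true]
      · left; rw [hA]
    · -- A, nonempty partition
      have ha : M.sup ∈ M := sup_mem hM0
      have hap : M.sup ≠ 0 := hpos _ ha
      have hcons : M.sup ::ₘ M.erase M.sup = M := Multiset.cons_erase ha
      have hsumE : M.sup + (M.erase M.sup).sum = M.sum := by
        conv_rhs => rw [← hcons]
        rw [Multiset.sum_cons]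
      have ht1 : 1 ≤ Multiset.card M := Multiset.card_pos.2 hM0
      have hcardE : Multiset.card (M.erase M.sup) = Multiset.card M - 1 := by
        rw [Multiset.card_erase_of_mem ha, Nat.pred_eq_sub_one]
      have hc0 : (0:ℤ) ≤ (M.sup:ℤ) - Multiset.card M - 3*j := by omega
      obtain ⟨c, hcz⟩ : ∃ c : ℕ, (c : ℤ) = (M.sup:ℤ) - Multiset.card M - 3*j :=
        ⟨_, Int.toNat_of_nonneg hc0⟩
      set E : Multiset ℕ := (M.erase M.sup).map (· + 1) with hEdef
      have hA : phi (j, M) = (j + 1, E + Multiset.replicate c 1) := by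
        rw [hphi, phiA, if_neg hM0]
        have hct : (((M.sup):ℤ) - Multiset.card M - 3*j).toNat = c := by omega
        rw [hct]
      have hEsum : E.sum = (M.erase M.sup).sum + Multiset.card (M.erase M.sup) :=
        sum_map_succ _
      have hEcard : Multiset.card E = Multiset.card M - 1 := by
        rw [hEdef, Multiset.card_map, hcardE]
      have hμsum : ((E + Multiset.replicate c 1).sum : ℤ) = (M.sum : ℤ) - 3*j - 1 := by
        have h1 : (E + Multiset.replicate c 1).sum = E.sum + c := by
          rw [Multiset.sum_add, Multiset.sum_replicate, smul_eq_mul, mul_one]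
        rw [h1, hEsum]
        omega
      have hμpos : ∀ i ∈ E + Multiset.replicate c 1, i ≠ 0 := by
        intro i hi
        rcases Multiset.mem_add.1 hi with hi | hi
        · rcases Multiset.mem_map.1 hi with ⟨x, _, rfl⟩; omega
        · rw [Multiset.eq_of_mem_replicate hi]; omega
      refine ⟨?_, ?_, ?_⟩
      · rw [hA, mem_S]
        refine ⟨?_, hμpos⟩
        rw [hμsum, gp_succ]
        omega
      · rw [hA]
        by_cases hμ0 : E + Multiset.replicate c 1 = 0
        · have hcard0 : Multiset.card (E + Multiset.replicate c 1) = 0 := by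
            rw [hμ0]; rfl
          rw [Multiset.card_add, Multiset.card_replicate] at hcard0
          have hc00 : c = 0 := by omega
          have hE0 : Multiset.card E = 0 := by omega
          have hM1 : Multiset.card M = 1 := by omega
          have hj0 : 0 ≤ j := by
            have : 1 ≤ M.sup := by omega
            omega
          rw [hμ0, phi_eqB (by
            simp only [Multiset.card_zero, Nat.cast_zero, Multiset.sup_zero, zero_add]
            have hb : ((⊥:ℕ):ℤ) = 0 := rfl
            rw [hb]; omega), phiB]
          have h1 : ((Multiset.card (0 : Multiset ℕ) : ℤ) + 3*(j+1) - 2).toNat = M.sup := by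
            simp only [Multiset.card_zero, Nat.cast_zero]
            omega
          rw [h1]
          have h2 : ((0:Multiset ℕ).map (· - 1)) = 0 := rfl
          rw [h2]
          have h3 : ((M.sup ::ₘ (0:Multiset ℕ)).filter (0 < ·)) = M.sup ::ₘ 0 := by
            rw [Multiset.filter_cons_of_pos _ (by omega : 0 < M.sup)]
            rfl
          rw [h3]
          have hMeq : M.sup ::ₘ (0:Multiset ℕ) = M := by
            have h9 : Multiset.card (M.erase M.sup) = 0 := by omega
            rw [Multiset.card_eq_zero] at h9
            conv_rhs => rw [← hcons, h9]
          rw [hMeq]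
          simp only [Prod.mk.injEq, add_sub_cancel_right, and_true]
        · -- μ ≠ 0
          have hμsup : ((E + Multiset.replicate c 1).sup : ℤ) ≤ (M.sup : ℤ) + 1 := by
            have : ∀ i ∈ E + Multiset.replicate c 1, i ≤ M.sup + 1 := by
              intro i hi
              rcases Multiset.mem_add.1 hi with hi | hi
              · rcases Multiset.mem_map.1 hi with ⟨x, hx, rfl⟩
                have := Multiset.le_sup (Multiset.mem_of_mem_erase hx)
                omega
              · rw [Multiset.eq_of_mem_replicate hi]; omega
            have := Multiset.sup_le.2 this
            exact_mod_cast Nat.cast_le.2 this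
          have hμcard : (Multiset.card (E + Multiset.replicate c 1) : ℤ)
              = (Multiset.card M : ℤ) - 1 + c := by
            rw [Multiset.card_add, Multiset.card_replicate, hEcard]
            push_cast; omega
          rw [phi_eqB (by omega), phiB]
          have hm' : ((Multiset.card (E + Multiset.replicate c 1) : ℤ) + 3*(j+1) - 2).toNat
              = M.sup := by omega
          rw [hm']
          have hmap : (E + Multiset.replicate c 1).map (· - 1)
              = M.erase M.sup + Multiset.replicate c 0 := by
            rw [Multiset.map_add, hEdef, Multiset.map_map, Multiset.map_replicate]
            congr 1
            have h8 : ((fun x => x - 1) ∘ (fun x => x + 1) : ℕ → ℕ) = id :=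
              funext fun x => by simp
            rw [h8, Multiset.map_id]
          rw [hmap]
          have hfil : ((M.sup ::ₘ (M.erase M.sup + Multiset.replicate c 0)).filter (0 < ·))
              = M := by
            rw [Multiset.filter_cons_of_pos _ (by omega : 0 < M.sup), Multiset.filter_add]
            have h4 : (M.erase M.sup).filter (0 < ·) = M.erase M.sup :=
              Multiset.filter_eq_self.2 fun a haa =>
                Nat.pos_of_ne_zero (hpos _ (Multiset.mem_of_mem_erase haa))
            have h5 : (Multiset.replicate c (0:ℕ)).filter (fun x => 0 < x) = 0 :=
              Multiset.filter_eq_nil.2 fun a haa => by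
                rw [Multiset.eq_of_mem_replicate haa]; omega
            rw [h4, h5, add_zero, hcons]
          rw [hfil]
          simp only [Prod.mk.injEq, add_sub_cancel_right, and_true]
      · left; rw [hA]
  · -- CASE B
    have hm0 : (0:ℤ) ≤ (Multiset.card M : ℤ) + 3*j - 2 := by
      by_cases h0 : M = 0
      · rw [h0] at hc
        simp only [Multiset.card_zero, Nat.cast_zero, zero_add, Multiset.sup_zero] at hc
        have hb : ((⊥:ℕ):ℤ) = 0 := rfl
        rw [hb] at hc; omega
      · have h1 : M.sup ≠ 0 := hpos _ (sup_mem h0)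
        omega
    obtain ⟨m, hmz⟩ : ∃ m : ℕ, (m : ℤ) = (Multiset.card M : ℤ) + 3*j - 2 :=
      ⟨_, Int.toNat_of_nonneg hm0⟩
    have hB : phi (j, M) = (j - 1, (m ::ₘ M.map (· - 1)).filter (0 < ·)) := by
      rw [phi_eqB hc, phiB]
      have h1 : ((Multiset.card M : ℤ) + 3*j - 2).toNat = m := by omega
      rw [h1]
    have hpred := sum_map_pred hpos
    have hνsum : (((m ::ₘ M.map (· - 1)).filter (0 < ·)).sum : ℤ)
        = (M.sum : ℤ) + 3*j - 2 := by
      have h1 : ((m ::ₘ M.map (· - 1)).filter (0 < ·)).sum = m + (M.map (· - 1)).sum := by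
        rw [sum_filter_pos, Multiset.sum_cons]
      rw [h1]; omega
    refine ⟨?_, ?_, ?_⟩
    · rw [hB, mem_S]
      constructor
      · rw [hνsum, gp_pred]
        omega
      · intro i hi
        have := (Multiset.mem_filter.1 hi).2
        omega
    · rw [hB]
      by_cases hm1 : m = 0
      · -- degenerate: all parts equal to 1
        subst hm1
        have hj0 : j ≤ 0 := by omega
        have hM : M = Multiset.replicate (Multiset.card M) 1 := by
          rw [Multiset.eq_replicate_card]
          intro b hb
          have h1 := hpos b hb
          have h2 : b ≤ M.sup := Multiset.le_sup hb
          omega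
        have hν0 : ((0 ::ₘ M.map (· - 1)).filter (0 < ·)) = 0 := by
          rw [Multiset.filter_eq_nil]
          intro a haa
          rcases Multiset.mem_cons.1 haa with rfl | haa
          · omega
          · rcases Multiset.mem_map.1 haa with ⟨x, hx, rfl⟩
            have h3 : x ≤ M.sup := Multiset.le_sup hx
            have h4 := hpos x hx
            omega
        rw [hν0]
        rw [phi_eqA (by
          simp only [Multiset.card_zero, Nat.cast_zero, zero_add, Multiset.sup_zero]
          have hb : ((⊥:ℕ):ℤ) = 0 := rfl
          rw [hb]; omega), phiA, if_pos rfl]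
        have h5 : (-3*(j-1)-1).toNat = Multiset.card M := by omega
        rw [h5, ← hM, sub_add_cancel]
      · -- m ≥ 1
        have hmpos : 0 < m := Nat.pos_of_ne_zero hm1
        have hsup_le : M.sup ≤ m + 1 := by omega
        have hR : (M.map (· - 1)).filter (0 < ·)
            = (M.filter (fun x => 2 ≤ x)).map (· - 1) := by
          rw [Multiset.filter_map]
          exact congrArg _ (Multiset.filter_congr fun x _ => by
            simp only [Function.comp_apply]
            omega)
        have hν : ((m ::ₘ M.map (· - 1)).filter (0 < ·))
            = m ::ₘ (M.filter (fun x => 2 ≤ x)).map (· - 1) := by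
          rw [Multiset.filter_cons_of_pos _ hmpos, hR]
        rw [hν]
        have hc₂ : Multiset.card (M.filter (fun x => 2 ≤ x)) ≤ Multiset.card M :=
          Multiset.card_le_card (Multiset.filter_le _ _)
        have hcardν : Multiset.card (m ::ₘ (M.filter (fun x => 2 ≤ x)).map (· - 1))
            = Multiset.card (M.filter (fun x => 2 ≤ x)) + 1 := by
          rw [Multiset.card_cons, Multiset.card_map]
        have hsupν : (m ::ₘ (M.filter (fun x => 2 ≤ x)).map (· - 1)).sup = m := by
          apply le_antisymm
          · apply Multiset.sup_le.2
            intro b hb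
            rcases Multiset.mem_cons.1 hb with rfl | hb
            · exact le_refl _
            · rcases Multiset.mem_map.1 hb with ⟨x, hx, rfl⟩
              have h3 : x ≤ M.sup := Multiset.le_sup (Multiset.mem_of_mem_filter hx)
              omega
          · exact Multiset.le_sup (Multiset.mem_cons_self _ _)
        rw [phi_eqA (by rw [hsupν, hcardν]; push_cast; omega), phiA,
          if_neg (Multiset.cons_ne_zero), hsupν]
        rw [Multiset.erase_cons_head]
        have h7 : ((M.filter (fun x => 2 ≤ x)).map (· - 1)).map (· + 1)
            = M.filter (fun x => 2 ≤ x) := by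
          rw [Multiset.map_map]
          have h8 : (M.filter (fun x => 2 ≤ x)).map ((fun x => x + 1) ∘ (fun x => x - 1))
              = (M.filter (fun x => 2 ≤ x)).map id :=
            Multiset.map_congr rfl fun x hx => by
              have := (Multiset.mem_filter.1 hx).2
              simp only [Function.comp_apply, id_eq]
              omega
          rw [h8, Multiset.map_id]
        rw [h7]
        have h9 : ((m:ℤ) - (Multiset.card (m ::ₘ (M.filter (fun x => 2 ≤ x)).map (· - 1)) : ℤ)
            - 3*(j-1)).toNat = Multiset.card M - Multiset.card (M.filter (fun x => 2 ≤ x)) := by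
          rw [hcardν]; push_cast; omega
        rw [h9]
        have h10 : M.filter (fun x => ¬ 2 ≤ x)
            = Multiset.replicate (Multiset.card M - Multiset.card (M.filter (fun x => 2 ≤ x))) 1 := by
          rw [Multiset.eq_replicate]
          constructor
          · have h11 := congrArg Multiset.card (Multiset.filter_add_not (fun x => 2 ≤ x) M)
            rw [Multiset.card_add] at h11
            omega
          · intro b hb
            have h12 := Multiset.mem_filter.1 hb
            have h13 := hpos b h12.1
            have h14 := h12.2
            omega
        rw [← h10, Multiset.filter_add_not, sub_add_cancel]
    · right; rw [hB]

end PentAux2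

namespace PentAux2
open Multiset PentAux

lemma signs (i i' : ℤ) (h : i' = i + 1 ∨ i' = i - 1) :
    (-1:ℤ)^i.natAbs + (-1:ℤ)^i'.natAbs = 0 := by
  rcases Int.even_or_odd i with he | ho
  · have ho' : Odd i' := by
      rcases h with rfl | rfl
      · exact he.add_one
      · exact he.sub_odd odd_one
    rw [Even.neg_one_pow (Int.natAbs_even.2 he), Odd.neg_one_pow (Int.natAbs_odd.2 ho')]
    ring
  · have he' : Even i' := by
      rcases h with rfl | rfl
      · exact ho.add_one
      · exact ho.sub_odd odd_one
    rw [Odd.neg_one_pow (Int.natAbs_odd.2 ho), Even.neg_one_pow (Int.natAbs_even.2 he')]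
    ring

lemma master (n : ℕ) (hn : 1 ≤ n) :
    ∑ x ∈ S n, ((-1:ℤ)^x.1.natAbs) = 0 := by
  apply Finset.sum_involution (fun a _ => phi a)
  · exact fun a ha => signs _ _ (phi_good hn ha).2.2
  · intro a ha _ hcon
    have h := (phi_good hn ha).2.2
    rw [hcon] at h
    omega
  · exact fun a ha => (phi_good hn ha).1
  · exact fun a ha => (phi_good hn ha).2.1

lemma card_filter_eq (n : ℕ) (j : ℤ) :
    (((allP n).filter (fun M => ((M.sum:ℤ) = (n:ℤ) - gp j ∧ ∀ i ∈ M, i ≠ 0))).card : ℤ)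
      = pz ((n:ℤ) - gp j) := by
  by_cases hng : (0:ℤ) ≤ (n:ℤ) - gp j
  · rw [pz, if_pos hng]
    congr 1
    have himg : (allP n).filter (fun M => ((M.sum:ℤ) = (n:ℤ) - gp j ∧ ∀ i ∈ M, i ≠ 0))
        = Finset.image (fun P : Nat.Partition ((n:ℤ) - gp j).toNat => P.parts)
            Finset.univ := by
      ext M
      simp only [Finset.mem_filter, Finset.mem_image, Finset.mem_univ, true_and]
      constructor
      · rintro ⟨hall, hsum, hpos⟩
        exact ⟨⟨M, fun hi => Nat.pos_of_ne_zero (hpos _ hi), by omega⟩, rfl⟩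
      · rintro ⟨P, rfl⟩
        have h1 := P.parts_sum
        have h2 := gp_nonneg j
        exact ⟨mem_allP.2 ⟨by omega, fun i hi => (P.parts_pos hi).ne'⟩, by omega,
          fun i hi => (P.parts_pos hi).ne'⟩
    rw [himg, Finset.card_image_of_injective _ (fun P Q h => Nat.Partition.ext h),
      Finset.card_univ]
  · rw [pz, if_neg hng]
    have he : (Finset.filter (fun M => ((M.sum:ℤ) = (n:ℤ) - gp j ∧ ∀ i ∈ M, i ≠ 0))
        (allP n)) = ∅ := by
      rw [Finset.filter_eq_empty_iff]
      intro M _ hcon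
      obtain ⟨h1, _⟩ := hcon
      have h0 : (0:ℤ) ≤ (M.sum : ℤ) := Int.natCast_nonneg _
      omega
    rw [he]
    simp

lemma sum_S_eq (n : ℕ) :
    ∑ x ∈ S n, ((-1:ℤ)^x.1.natAbs)
      = ∑ j ∈ Finset.Icc (-(n:ℤ)-1) ((n:ℤ)+1), (-1:ℤ)^j.natAbs * pz ((n:ℤ) - gp j) := by
  rw [S, Finset.sum_filter, Finset.sum_product]
  apply Finset.sum_congr rfl
  intro j _
  dsimp only
  rw [← Finset.sum_filter, Finset.sum_const, nsmul_eq_mul, card_filter_eq, mul_comm]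

lemma sum_Icc_split (F : ℤ → ℤ) (N : ℕ) :
    Finset.sum (Finset.Icc (-(N:ℤ)) (N:ℤ)) F
      = F 0 + ∑ k ∈ Finset.Icc 1 N, (F (k:ℤ) + F (-(k:ℤ))) := by
  induction N with
  | zero =>
    norm_num
  | succ N ih =>
    have h1 : Finset.Icc (-(N+1:ℕ):ℤ) ((N+1:ℕ):ℤ)
        = insert (-(N+1:ℕ):ℤ) (insert ((N+1:ℕ):ℤ) (Finset.Icc (-(N:ℤ)) (N:ℤ))) := by
      ext x
      simp only [Finset.mem_Icc, Finset.mem_insert]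
      push_cast
      omega
    have h2 : Finset.Icc 1 (N+1) = insert (N+1) (Finset.Icc 1 N) := by
      ext x
      simp only [Finset.mem_Icc, Finset.mem_insert]
      omega
    rw [h1, Finset.sum_insert (by
        simp only [Finset.mem_insert, Finset.mem_Icc]
        push_cast; omega),
      Finset.sum_insert (by
        simp only [Finset.mem_Icc]
        push_cast; omega),
      ih, h2, Finset.sum_insert (by
        simp only [Finset.mem_Icc]
        omega)]
    push_cast
    ring

lemma pent1 (k : ℕ) (hk : 1 ≤ k) : ((k * (3*k - 1) / 2 : ℕ) : ℤ) = gp (k:ℤ) := by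
  have hev : Even (k * (3*k - 1)) := by
    rcases Nat.even_or_odd k with he | ⟨t, ht⟩
    · exact he.mul_right _
    · exact Even.mul_left ⟨3*t + 1, by omega⟩ _
  obtain ⟨c, hc⟩ := hev
  have hdiv : k * (3*k - 1) / 2 = c := by omega
  have hcast : ((k * (3*k - 1) : ℕ) : ℤ) = (k:ℤ) * (3*(k:ℤ) - 1) := by
    push_cast [Nat.cast_sub (by omega : 1 ≤ 3*k)]
    ring
  have h2 := two_gp (k:ℤ)
  rw [hdiv]
  have hcc : ((k * (3*k - 1) : ℕ) : ℤ) = 2*(c:ℤ) := by omega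
  linarith [hcast, hcc, h2]

lemma pent2 (k : ℕ) : ((k * (3*k + 1) / 2 : ℕ) : ℤ) = gp (-(k:ℤ)) := by
  have hev : Even (k * (3*k + 1)) := by
    rcases Nat.even_or_odd k with he | ⟨t, ht⟩
    · exact he.mul_right _
    · exact Even.mul_left ⟨3*t + 2, by omega⟩ _
  obtain ⟨c, hc⟩ := hev
  have hdiv : k * (3*k + 1) / 2 = c := by omega
  have hcast : ((k * (3*k + 1) : ℕ) : ℤ) = (k:ℤ) * (3*(k:ℤ) + 1) := by push_cast; ring
  have h2 := two_gp (-(k:ℤ))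
  have h3 : (-(k:ℤ)) * (3*(-(k:ℤ)) - 1) = (k:ℤ) * (3*(k:ℤ) + 1) := by ring
  rw [h3] at h2
  rw [hdiv]
  have hcc : ((k * (3*k + 1) : ℕ) : ℤ) = 2*(c:ℤ) := by omega
  linarith [hcast, hcc, h2]

end PentAux2


theorem stmt_9 (n : ℕ) (hn : 1 ≤ n) :
    pz n = ∑ j ∈ Finset.Icc 1 n,
      (-1 : ℤ) ^ (j - 1) *
        (pz ((n : ℤ) - ((j * (3 * j - 1) / 2 : ℕ) : ℤ)) +
         pz ((n : ℤ) - ((j * (3 * j + 1) / 2 : ℕ) : ℤ))) := by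
  classical
  have hm := PentAux2.master n hn
  rw [PentAux2.sum_S_eq] at hm
  have hrange : Finset.Icc (-(n:ℤ)-1) ((n:ℤ)+1)
      = Finset.Icc (-((n+1:ℕ):ℤ)) ((n+1:ℕ):ℤ) := by
    congr 1 <;> push_cast <;> ring
  rw [hrange] at hm
  rw [PentAux2.sum_Icc_split (fun j => (-1:ℤ)^j.natAbs * pz ((n:ℤ) - PentAux.gp j)) (n+1)]
    at hm
  have hF0 : (-1:ℤ)^(0:ℤ).natAbs * pz ((n:ℤ) - PentAux.gp 0) = pz (n:ℤ) := by
    rw [PentAux.gp_zero]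
    norm_num
  rw [hF0] at hm
  have hterm : ∀ k ∈ Finset.Icc 1 (n+1),
      ((-1:ℤ)^((k:ℤ)).natAbs * pz ((n:ℤ) - PentAux.gp (k:ℤ))
        + (-1:ℤ)^((-(k:ℤ))).natAbs * pz ((n:ℤ) - PentAux.gp (-(k:ℤ))))
      = -((-1 : ℤ) ^ (k - 1) *
        (pz ((n : ℤ) - ((k * (3 * k - 1) / 2 : ℕ) : ℤ)) +
         pz ((n : ℤ) - ((k * (3 * k + 1) / 2 : ℕ) : ℤ)))) := by
    intro k hk
    have hk1 : 1 ≤ k := (Finset.mem_Icc.1 hk).1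
    rw [Int.natAbs_neg, Int.natAbs_natCast, PentAux2.pent1 k hk1, PentAux2.pent2 k]
    have hpow : ((-1:ℤ))^k = -(-1:ℤ)^(k-1) := by
      obtain ⟨m, rfl⟩ : ∃ m, k = m + 1 := ⟨k - 1, by omega⟩
      rw [pow_succ]
      simp
    rw [hpow]
    ring
  rw [Finset.sum_congr rfl hterm] at hm
  have hz1 : pz ((n:ℤ) - (((n+1) * (3 * (n+1) - 1) / 2 : ℕ) : ℤ)) = 0 := by
    rw [PentAux2.pent1 (n+1) (by omega), pz, if_neg]
    have h := PentAux.abs_le_gp ((n+1:ℕ):ℤ)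
    rw [abs_of_nonneg (Int.natCast_nonneg _)] at h
    push_cast at h ⊢
    omega
  have hz2 : pz ((n:ℤ) - (((n+1) * (3 * (n+1) + 1) / 2 : ℕ) : ℤ)) = 0 := by
    rw [PentAux2.pent2 (n+1), pz, if_neg]
    have h := PentAux.abs_le_gp (-((n+1:ℕ):ℤ))
    rw [abs_neg, abs_of_nonneg (Int.natCast_nonneg _)] at h
    push_cast at h ⊢
    omega
  have hsplit : Finset.Icc 1 (n+1) = insert (n+1) (Finset.Icc 1 n) := by
    ext x
    simp only [Finset.mem_Icc, Finset.mem_insert]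
    omega
  rw [hsplit, Finset.sum_insert (by simp only [Finset.mem_Icc]; omega)] at hm
  rw [hz1, hz2] at hm
  have : -((-1 : ℤ) ^ (n + 1 - 1) * ((0:ℤ) + 0)) = 0 := by ring
  rw [this] at hm
  have hneg : ∑ k ∈ Finset.Icc 1 n, -((-1 : ℤ) ^ (k - 1) *
        (pz ((n : ℤ) - ((k * (3 * k - 1) / 2 : ℕ) : ℤ)) +
         pz ((n : ℤ) - ((k * (3 * k + 1) / 2 : ℕ) : ℤ))))
      = -∑ k ∈ Finset.Icc 1 n, ((-1 : ℤ) ^ (k - 1) *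
        (pz ((n : ℤ) - ((k * (3 * k - 1) / 2 : ℕ) : ℤ)) +
         pz ((n : ℤ) - ((k * (3 * k + 1) / 2 : ℕ) : ℤ)))) := by
    rw [← Finset.sum_neg_distrib]
  rw [hneg] at hm
  linarith [hm]
end

section
/- The formal power series identity Π_{m ≥ 1} (1 − q^m) = Σ_{j ∈ ℤ} (−1)^j q^{(3j² + j)/2} holds in the ring of formal power series over ℤ. -/
open Finset

noncomputable def mi (S : Finset ℕ) : ℕ := sInf {x | x ∈ S}
def mx (S : Finset ℕ) : ℕ := S.sup id
noncomputable def rr (S : Finset ℕ) : ℕ := sInf {x | x ≠ 0 ∧ Finset.Icc x (mx S) ⊆ S}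

def Exc (S : Finset ℕ) : Prop :=
  (∃ j : ℕ, S = Finset.Icc (j+1) (2*j)) ∨ (∃ j : ℕ, 1 ≤ j ∧ S = Finset.Icc j (2*j-1))

noncomputable def phi (S : Finset ℕ) : Finset ℕ :=
  if rr S + mi S ≤ mx S + 1 then
    insert (mx S + 1) ((S.erase (mi S)).erase (mx S + 1 - mi S))
  else
    insert (mx S + 1 - rr S) (insert (rr S - 1) (S.erase (mx S)))

lemma mi_mem {S : Finset ℕ} (hS : S.Nonempty) : mi S ∈ S := by
  obtain ⟨a, ha⟩ := hS
  exact Nat.sInf_mem ⟨a, ha⟩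

lemma mi_le {S : Finset ℕ} {x : ℕ} (hx : x ∈ S) : mi S ≤ x := Nat.sInf_le hx

lemma le_mx {S : Finset ℕ} {x : ℕ} (hx : x ∈ S) : x ≤ mx S := Finset.le_sup (f := id) hx

lemma mx_mem {S : Finset ℕ} (hS : S.Nonempty) : mx S ∈ S := by
  obtain ⟨b, hb, h⟩ := Finset.exists_mem_eq_sup S hS id
  rw [mx, h]; exact hb

lemma mem_pos {S : Finset ℕ} (h0 : 0 ∉ S) {x : ℕ} (hx : x ∈ S) : 1 ≤ x := by
  rcases Nat.eq_zero_or_pos x with h | h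
  · subst h; exact absurd hx h0
  · exact h

lemma mx_mem_rset {S : Finset ℕ} (hS : S.Nonempty) (h0 : 0 ∉ S) :
    mx S ∈ {x | x ≠ 0 ∧ Finset.Icc x (mx S) ⊆ S} := by
  refine ⟨Nat.one_le_iff_ne_zero.mp (mem_pos h0 (mx_mem hS)), ?_⟩
  intro x hx
  simp only [Finset.mem_Icc] at hx
  have : x = mx S := le_antisymm hx.2 hx.1
  subst this; exact mx_mem hS

lemma rr_spec {S : Finset ℕ} (hS : S.Nonempty) (h0 : 0 ∉ S) :
    rr S ≠ 0 ∧ Finset.Icc (rr S) (mx S) ⊆ S :=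
  Nat.sInf_mem ⟨mx S, mx_mem_rset hS h0⟩

lemma rr_le_mx {S : Finset ℕ} (hS : S.Nonempty) (h0 : 0 ∉ S) : rr S ≤ mx S :=
  Nat.sInf_le (mx_mem_rset hS h0)

lemma rr_pos {S : Finset ℕ} (hS : S.Nonempty) (h0 : 0 ∉ S) : 1 ≤ rr S :=
  Nat.one_le_iff_ne_zero.mpr (rr_spec hS h0).1

lemma rr_mem {S : Finset ℕ} (hS : S.Nonempty) (h0 : 0 ∉ S) : rr S ∈ S :=
  (rr_spec hS h0).2 (Finset.mem_Icc.mpr ⟨le_refl _, rr_le_mx hS h0⟩)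

lemma mi_le_rr {S : Finset ℕ} (hS : S.Nonempty) (h0 : 0 ∉ S) : mi S ≤ rr S :=
  mi_le (rr_mem hS h0)

lemma rr_pred_not_mem {S : Finset ℕ} (hS : S.Nonempty) (h0 : 0 ∉ S) : rr S - 1 ∉ S := by
  rcases Nat.lt_or_ge (rr S) 2 with h | h
  · have h1 : rr S = 1 := le_antisymm (by omega) (rr_pos hS h0)
    rw [h1]; simpa using h0
  · intro hmem
    have hlt : rr S - 1 < rr S := by omega
    have := Nat.notMem_of_lt_sInf (s := {x | x ≠ 0 ∧ Finset.Icc x (mx S) ⊆ S}) hlt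
    apply this
    refine ⟨by omega, ?_⟩
    intro x hx
    simp only [Finset.mem_Icc] at hx
    rcases Nat.eq_or_lt_of_le hx.1 with h' | h'
    · rw [← h']; exact hmem
    · exact (rr_spec hS h0).2 (Finset.mem_Icc.mpr ⟨by omega, hx.2⟩)

lemma mi_pos {S : Finset ℕ} (hS : S.Nonempty) (h0 : 0 ∉ S) : 1 ≤ mi S :=
  mem_pos h0 (mi_mem hS)

lemma mi_le_mx {S : Finset ℕ} (hS : S.Nonempty) : mi S ≤ mx S := le_mx (mi_mem hS)

lemma subset_Icc {S : Finset ℕ} (h0 : 0 ∉ S) : S ⊆ Finset.Icc (mi S) (mx S) := by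
  intro x hx
  exact Finset.mem_Icc.mpr ⟨mi_le hx, le_mx hx⟩

-- mi and mx of intervals
lemma mi_Icc {a b : ℕ} (hab : a ≤ b) : mi (Finset.Icc a b) = a := by
  have hne : (Finset.Icc a b).Nonempty := Finset.nonempty_Icc.mpr hab
  have h1 : mi (Finset.Icc a b) ≤ a := mi_le (Finset.mem_Icc.mpr ⟨le_refl _, hab⟩)
  have h2 := mi_mem hne
  rw [Finset.mem_Icc] at h2
  omega

lemma mx_Icc {a b : ℕ} (hab : a ≤ b) : mx (Finset.Icc a b) = b := by
  have hne : (Finset.Icc a b).Nonempty := Finset.nonempty_Icc.mpr hab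
  have h1 : b ≤ mx (Finset.Icc a b) := le_mx (Finset.mem_Icc.mpr ⟨hab, le_refl _⟩)
  have h2 := mx_mem hne
  rw [Finset.mem_Icc] at h2
  omega

lemma rr_Icc_le {a b : ℕ} (hab : a ≤ b) (ha : 1 ≤ a) : rr (Finset.Icc a b) ≤ a := by
  apply Nat.sInf_le
  exact ⟨by omega, by rw [mx_Icc hab]⟩

-- Gauss sums
lemma Icc_eq_sdiff (a b : ℕ) : Finset.Icc a b = Finset.range (b+1) \ Finset.range a := by
  ext x; simp only [Finset.mem_Icc, Finset.mem_sdiff, Finset.mem_range]; omega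

lemma sum_Icc_two (a b : ℕ) :
    (∑ i ∈ Finset.Icc a b, i) * 2 + a * (a - 1) = (b+1) * b ∨ Finset.Icc a b = ∅ := by
  rcases Nat.lt_or_ge b (a) with h | h
  · right; exact Finset.Icc_eq_empty (by omega)
  · left
    have h3 : Finset.range a ⊆ Finset.range (b+1) := by
      intro x; simp only [Finset.mem_range]; omega
    have h4 := Finset.sum_sdiff (f := fun i : ℕ => i) h3
    rw [Icc_eq_sdiff]
    have h1 := Finset.sum_range_id_mul_two a
    have h2 := Finset.sum_range_id_mul_two (b+1)
    simp only [Nat.add_sub_cancel] at h2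
    omega

lemma caseA {S : Finset ℕ} (hS : S.Nonempty) (h0 : 0 ∉ S) (hne : ¬Exc S)
    (hc : rr S + mi S ≤ mx S + 1) :
    (phi S).Nonempty ∧ 0 ∉ phi S ∧ ¬Exc (phi S) ∧ (∑ x ∈ phi S, x) = (∑ x ∈ S, x) ∧
    S.card = (phi S).card + 1 ∧ mx (phi S) = mx S + 1 ∧
    ¬(rr (phi S) + mi (phi S) ≤ mx (phi S) + 1) ∧
    insert (mx (phi S) + 1 - rr (phi S)) (insert (rr (phi S) - 1)
      ((phi S).erase (mx (phi S)))) = S := by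
  set s := mi S with hs_def
  set M := mx S with hM_def
  set r := rr S with hr_def
  have hs1 : s ∈ S := mi_mem hS
  have hM1 : M ∈ S := mx_mem hS
  have hsr : s ≤ r := mi_le_rr hS h0
  have hrM : r ≤ M := rr_le_mx hS h0
  have hsp : 1 ≤ s := mi_pos hS h0
  have hsM : s ≤ M := mi_le_mx hS
  have hIcc : Finset.Icc r M ⊆ S := (rr_spec hS h0).2
  -- M ≥ 2s
  have hM2s : 2 * s ≤ M := by
    by_contra hcon
    push_neg at hcon
    have hrs : r = s := by omega
    have hSeq : S = Finset.Icc s M := by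
      apply Finset.Subset.antisymm (subset_Icc h0)
      have h2 : Finset.Icc s M ⊆ S := by rw [← hrs]; exact hIcc
      exact h2
    have hM' : M = 2 * s - 1 := by omega
    exact hne (Or.inr ⟨s, hsp, by rw [hSeq, hM']⟩)
  have hmem2 : M + 1 - s ∈ S := hIcc (Finset.mem_Icc.mpr ⟨by omega, by omega⟩)
  have hne2 : s ≠ M + 1 - s := by omega
  have hM1n : M + 1 ∉ S := fun h => by have := le_mx h; omega
  have phi_eq : phi S = insert (M + 1) ((S.erase s).erase (M + 1 - s)) := by
    rw [phi, if_pos hc]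
  set T := insert (M + 1) ((S.erase s).erase (M + 1 - s)) with hT_def
  rw [phi_eq]
  have hmem2' : M + 1 - s ∈ S.erase s := Finset.mem_erase.mpr ⟨fun h => hne2 h.symm, hmem2⟩
  have hM1e : M + 1 ∉ (S.erase s).erase (M + 1 - s) := fun h =>
    hM1n (Finset.mem_of_mem_erase (Finset.mem_of_mem_erase h))
  have hTne : T.Nonempty := ⟨M + 1, Finset.mem_insert_self _ _⟩
  have hmemT : ∀ x ∈ T, x = M + 1 ∨ (x ∈ S ∧ x ≠ s ∧ x ≠ M + 1 - s) := by
    intro x hx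
    rcases Finset.mem_insert.mp hx with h | h
    · exact Or.inl h
    · right
      rw [Finset.mem_erase, Finset.mem_erase] at h
      exact ⟨h.2.2, h.2.1, h.1⟩
  have h0T : 0 ∉ T := by
    intro h
    rcases hmemT 0 h with h | h
    · omega
    · exact h0 h.1
  -- sum
  have hsum : (∑ x ∈ T, x) = ∑ x ∈ S, x := by
    have e1 := Finset.sum_erase_add S (fun x => x) hs1
    have e2 := Finset.sum_erase_add (S.erase s) (fun x => x) hmem2'
    have e3 : (∑ x ∈ T, x) = (M + 1) + ∑ x ∈ (S.erase s).erase (M + 1 - s), x := by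
      rw [hT_def, Finset.sum_insert hM1e]
    omega
  -- card
  have hcard : S.card = T.card + 1 := by
    have c1 : T.card = ((S.erase s).erase (M + 1 - s)).card + 1 :=
      Finset.card_insert_of_notMem hM1e
    have c2 : ((S.erase s).erase (M + 1 - s)).card = (S.erase s).card - 1 :=
      Finset.card_erase_of_mem hmem2'
    have c3 : (S.erase s).card = S.card - 1 := Finset.card_erase_of_mem hs1
    have c4 : 1 ≤ (S.erase s).card := Finset.card_pos.mpr ⟨_, hmem2'⟩
    have c5 : 1 ≤ S.card := Finset.card_pos.mpr hS
    omega
  -- mx T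
  have hmxT : mx T = M + 1 := by
    apply le_antisymm
    · apply Finset.sup_le
      intro x hx
      show x ≤ M + 1
      rcases hmemT x hx with h | h
      · omega
      · have := le_mx h.1; omega
    · exact le_mx (Finset.mem_insert_self _ _)
  -- mi T
  have hmiT : s + 1 ≤ mi T := by
    have hm := mi_mem hTne
    rcases hmemT _ hm with h | h
    · omega
    · have h1 : s ≤ mi T := by rw [hs_def]; exact mi_le h.1
      have h2 := h.2.1
      omega
  -- rr T
  have hrrT : rr T = M + 2 - s := by
    have hub : rr T ≤ M + 2 - s := by
      apply Nat.sInf_le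
      refine ⟨by omega, ?_⟩
      intro x hx
      rw [Finset.mem_Icc, hmxT] at hx
      rcases Nat.eq_or_lt_of_le hx.2 with h | h
      · rw [h]; exact Finset.mem_insert_self _ _
      · have hxS : x ∈ S := hIcc (Finset.mem_Icc.mpr ⟨by omega, by omega⟩)
        apply Finset.mem_insert_of_mem
        rw [Finset.mem_erase, Finset.mem_erase]
        refine ⟨by omega, by omega, hxS⟩
    have hlb : M + 2 - s ≤ rr T := by
      by_contra hcon
      push_neg at hcon
      have hsub := (rr_spec hTne h0T).2
      rw [hmxT] at hsub
      have hmem3 : M + 1 - s ∈ T := hsub (Finset.mem_Icc.mpr ⟨by omega, by omega⟩)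
      rcases hmemT _ hmem3 with h | h
      · omega
      · exact h.2.2 rfl
    omega
  have hBcond : ¬(rr T + mi T ≤ mx T + 1) := by rw [hrrT, hmxT]; omega
  -- not Exc T
  have hneT : ¬Exc T := by
    rintro (⟨j, hj⟩ | ⟨j, hj1, hj⟩)
    · have hjne : T.Nonempty := hTne
      rw [hj] at hjne
      have hj2 : j + 1 ≤ 2 * j := by
        have := Finset.nonempty_Icc.mp hjne; omega
      have e1 : mi T = j + 1 := by rw [hj]; exact mi_Icc hj2
      have e2 : mx T = 2 * j := by rw [hj]; exact mx_Icc hj2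
      have e3 : rr T ≤ j + 1 := by rw [hj]; exact rr_Icc_le hj2 (by omega)
      rw [hrrT] at e3
      rw [e2] at hmxT
      omega
    · have hj2 : j ≤ 2 * j - 1 := by omega
      have e1 : mi T = j := by rw [hj]; exact mi_Icc hj2
      have e2 : mx T = 2 * j - 1 := by rw [hj]; exact mx_Icc hj2
      rw [e2] at hmxT
      have e3 : rr T ≤ j := by rw [hj]; exact rr_Icc_le hj2 hj1
      rw [hrrT] at e3
      omega
  -- inverse
  have hinv : insert (mx T + 1 - rr T) (insert (rr T - 1) (T.erase (mx T))) = S := by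
    have hx1 : mx T + 1 - rr T = s := by rw [hmxT, hrrT]; omega
    have hx2 : rr T - 1 = M + 1 - s := by rw [hrrT]; omega
    rw [hx1, hx2, hmxT, hT_def, Finset.erase_insert hM1e, Finset.insert_erase hmem2',
      Finset.insert_erase hs1]
  exact ⟨hTne, h0T, hneT, hsum, hcard, hmxT, hBcond, hinv⟩

lemma caseB {S : Finset ℕ} (hS : S.Nonempty) (h0 : 0 ∉ S) (hne : ¬Exc S)
    (hc : ¬(rr S + mi S ≤ mx S + 1)) :
    (phi S).Nonempty ∧ 0 ∉ phi S ∧ ¬Exc (phi S) ∧ (∑ x ∈ phi S, x) = (∑ x ∈ S, x) ∧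
    (phi S).card = S.card + 1 ∧ mx (phi S) + 1 = mx S ∧
    (rr (phi S) + mi (phi S) ≤ mx (phi S) + 1) ∧
    insert (mx (phi S) + 1) (((phi S).erase (mi (phi S))).erase
      (mx (phi S) + 1 - mi (phi S))) = S := by
  set s := mi S with hs_def
  set M := mx S with hM_def
  set r := rr S with hr_def
  push_neg at hc
  have hc' : M + 2 ≤ r + s := hc
  have hs1 : s ∈ S := mi_mem hS
  have hM1 : M ∈ S := mx_mem hS
  have hsr : s ≤ r := mi_le_rr hS h0
  have hrM : r ≤ M := rr_le_mx hS h0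
  have hsp : 1 ≤ s := mi_pos hS h0
  have hMp : 1 ≤ M := mem_pos h0 hM1
  have hIcc : Finset.Icc r M ⊆ S := (rr_spec hS h0).2
  have hrp1 : r - 1 ∉ S := rr_pred_not_mem hS h0
  have hsge2 : 2 ≤ s := by omega
  -- M + 3 ≤ 2r
  have h2r : M + 3 ≤ 2 * r := by
    by_contra hcon
    push_neg at hcon
    have hrs : s = r := by omega
    have hM' : M = 2 * r - 2 := by omega
    have hSeq : S = Finset.Icc s M := by
      apply Finset.Subset.antisymm (subset_Icc h0)
      have h2 : Finset.Icc s M ⊆ S := by rw [hrs]; exact hIcc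
      exact h2
    apply hne
    left
    refine ⟨s - 1, ?_⟩
    rw [hSeq]
    congr 1 <;> omega
  have hrge2 : 2 ≤ r := by omega
  have hsig1 : 1 ≤ M + 1 - r := by omega
  have hsiglt : M + 1 - r < s := by omega
  have hsignS : M + 1 - r ∉ S := fun h => by have := mi_le h; omega
  have hsigr : M + 1 - r < r - 1 := by omega
  have phi_eq : phi S = insert (M + 1 - r) (insert (r - 1) (S.erase M)) := by
    rw [phi, if_neg (by omega)]
  set T := insert (M + 1 - r) (insert (r - 1) (S.erase M)) with hT_def
  rw [phi_eq]
  have hsignT : M + 1 - r ∉ insert (r - 1) (S.erase M) := by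
    rw [Finset.mem_insert]
    rintro (h | h)
    · omega
    · exact hsignS (Finset.mem_of_mem_erase h)
  have hrpnT : r - 1 ∉ S.erase M := fun h => hrp1 (Finset.mem_of_mem_erase h)
  have hmemT : ∀ x ∈ T, x = M + 1 - r ∨ x = r - 1 ∨ (x ∈ S ∧ x ≠ M) := by
    intro x hx
    rcases Finset.mem_insert.mp hx with h | h
    · exact Or.inl h
    rcases Finset.mem_insert.mp h with h | h
    · exact Or.inr (Or.inl h)
    · exact Or.inr (Or.inr ⟨Finset.mem_of_mem_erase h, (Finset.mem_erase.mp h).1⟩)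
  have hTne : T.Nonempty := ⟨M + 1 - r, Finset.mem_insert_self _ _⟩
  have h0T : 0 ∉ T := by
    intro h
    rcases hmemT 0 h with h | h | h
    · omega
    · omega
    · exact h0 h.1
  -- sum
  have hsum : (∑ x ∈ T, x) = ∑ x ∈ S, x := by
    have e1 := Finset.sum_erase_add S (fun x => x) hM1
    have e2 : (∑ x ∈ T, x) = (M + 1 - r) + ((r - 1) + ∑ x ∈ S.erase M, x) := by
      rw [hT_def, Finset.sum_insert hsignT, Finset.sum_insert hrpnT]
    omega
  -- card
  have hcard : T.card = S.card + 1 := by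
    have c1 : T.card = (insert (r - 1) (S.erase M)).card + 1 :=
      Finset.card_insert_of_notMem hsignT
    have c2 : (insert (r - 1) (S.erase M)).card = (S.erase M).card + 1 :=
      Finset.card_insert_of_notMem hrpnT
    have c3 : (S.erase M).card = S.card - 1 := Finset.card_erase_of_mem hM1
    have c5 : 1 ≤ S.card := Finset.card_pos.mpr hS
    omega
  -- mx T
  have hmxT : mx T = M - 1 := by
    apply le_antisymm
    · apply Finset.sup_le
      intro x hx
      show x ≤ M - 1
      rcases hmemT x hx with h | h | h
      · omega
      · omega
      · have := le_mx h.1; have := h.2; omega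
    · rcases Nat.lt_or_ge (M - 1) r with h | h
      · have hrM' : r = M := by omega
        have : r - 1 ∈ T := Finset.mem_insert_of_mem (Finset.mem_insert_self _ _)
        have := le_mx this
        omega
      · have hmem : M - 1 ∈ S := hIcc (Finset.mem_Icc.mpr ⟨h, by omega⟩)
        have : M - 1 ∈ T := by
          apply Finset.mem_insert_of_mem
          apply Finset.mem_insert_of_mem
          exact Finset.mem_erase.mpr ⟨by omega, hmem⟩
        exact le_mx this
  -- mi T
  have hmiT : mi T = M + 1 - r := by
    apply le_antisymm
    · exact mi_le (Finset.mem_insert_self _ _)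
    · have hm := mi_mem hTne
      rcases hmemT _ hm with h | h | h
      · omega
      · omega
      · have : s ≤ mi T := by rw [hs_def]; exact mi_le h.1
        omega
  -- rr T ≤ r - 1
  have hrrT : rr T ≤ r - 1 := by
    apply Nat.sInf_le
    refine ⟨by omega, ?_⟩
    intro x hx
    rw [Finset.mem_Icc, hmxT] at hx
    rcases Nat.eq_or_lt_of_le hx.1 with h | h
    · rw [← h]; exact Finset.mem_insert_of_mem (Finset.mem_insert_self _ _)
    · have hxS : x ∈ S := hIcc (Finset.mem_Icc.mpr ⟨by omega, by omega⟩)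
      apply Finset.mem_insert_of_mem
      apply Finset.mem_insert_of_mem
      exact Finset.mem_erase.mpr ⟨by omega, hxS⟩
  have hAcond : rr T + mi T ≤ mx T + 1 := by rw [hmiT, hmxT]; omega
  -- not Exc T
  have hneT : ¬Exc T := by
    rintro (⟨j, hj⟩ | ⟨j, hj1, hj⟩)
    · have hjne : T.Nonempty := hTne
      rw [hj] at hjne
      have hj2 : j + 1 ≤ 2 * j := by
        have := Finset.nonempty_Icc.mp hjne; omega
      have e1 : mi T = j + 1 := by rw [hj]; exact mi_Icc hj2
      have e2 : mx T = 2 * j := by rw [hj]; exact mx_Icc hj2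
      have e3 : rr T + mi T ≤ mx T + 1 := hAcond
      have e4 : 1 ≤ rr T := rr_pos hTne h0T
      have e5 : j ∈ T := by
        have := (rr_spec hTne h0T).2
        apply this
        rw [Finset.mem_Icc, e2]
        omega
      rw [hj, Finset.mem_Icc] at e5
      omega
    · have hj2 : j ≤ 2 * j - 1 := by omega
      have e1 : mi T = j := by rw [hj]; exact mi_Icc hj2
      have e2 : mx T = 2 * j - 1 := by rw [hj]; exact mx_Icc hj2
      rw [hmiT] at e1
      rw [hmxT] at e2
      omega
  -- inverse
  have hinv : insert (mx T + 1) ((T.erase (mi T)).erase (mx T + 1 - mi T)) = S := by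
    have hx1 : mx T + 1 = M := by omega
    have hx2 : M - mi T = r - 1 := by rw [hmiT]; omega
    rw [hx1, hx2, hmiT, hT_def, Finset.erase_insert hsignT, Finset.erase_insert hrpnT,
      Finset.insert_erase hM1]
  exact ⟨hTne, h0T, hneT, hsum, hcard, by omega, hAcond, hinv⟩

lemma phi_def (S : Finset ℕ) : phi S =
    if rr S + mi S ≤ mx S + 1 then
      insert (mx S + 1) ((S.erase (mi S)).erase (mx S + 1 - mi S))
    else
      insert (mx S + 1 - rr S) (insert (rr S - 1) (S.erase (mx S))) := rfl

lemma phi_main {S : Finset ℕ} (hS : S.Nonempty) (h0 : 0 ∉ S) (hne : ¬Exc S) :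
    (phi S).Nonempty ∧ 0 ∉ phi S ∧ ¬Exc (phi S) ∧ (∑ x ∈ phi S, x) = (∑ x ∈ S, x) ∧
    ((phi S).card = S.card + 1 ∨ S.card = (phi S).card + 1) ∧ mx (phi S) ≤ mx S + 1 ∧
    phi (phi S) = S := by
  by_cases hc : rr S + mi S ≤ mx S + 1
  · obtain ⟨h1, h2, h3, h4, h5, h6, h7, h8⟩ := caseA hS h0 hne hc
    refine ⟨h1, h2, h3, h4, Or.inr h5, by omega, ?_⟩
    rw [phi_def (phi S), if_neg h7]
    exact h8
  · obtain ⟨h1, h2, h3, h4, h5, h6, h7, h8⟩ := caseB hS h0 hne hc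
    refine ⟨h1, h2, h3, h4, Or.inl h5, by omega, ?_⟩
    rw [phi_def (phi S), if_pos h7]
    exact h8

lemma sumE2 (k : ℕ) : (∑ i ∈ Finset.Icc (k+1) (2*k), i) * 2 = 3 * k^2 + k := by
  rcases sum_Icc_two (k+1) (2*k) with h | h
  · simp only [Nat.add_sub_cancel] at h
    have hr : (k+1)*k + (3*k^2+k) = (2*k+1)*(2*k) := by ring
    omega
  · have : k = 0 := by
      by_contra hk
      have : k + 1 ≤ 2 * k := by omega
      rw [Finset.Icc_eq_empty_iff] at h
      omega
    subst this
    simp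

lemma sumE1 (k : ℕ) (hk : 1 ≤ k) : (∑ i ∈ Finset.Icc k (2*k-1), i) * 2 + k = 3 * k^2 := by
  obtain ⟨m, rfl⟩ : ∃ m, k = m + 1 := ⟨k - 1, by omega⟩
  have he : 2 * (m+1) - 1 = 2*m+1 := by omega
  rw [he]
  rcases sum_Icc_two (m+1) (2*m+1) with h | h
  · simp only [Nat.add_sub_cancel] at h
    have hr : (m+1)*m + (3*(m+1)^2) = (2*m+1+1)*(2*m+1) + (m+1) := by ring
    omega
  · rw [Finset.Icc_eq_empty_iff] at h
    omega

lemma exc_empty : Exc (∅ : Finset ℕ) :=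
  Or.inl ⟨0, by rw [Finset.Icc_eq_empty (by omega)]⟩

open Classical in
lemma sum_nonexc (n : ℕ) :
    ∑ t ∈ ((Finset.Icc 1 (n+1)).powerset.filter (fun t => ∑ i ∈ t, i = n)).filter
        (fun t => ¬ Exc t), (-1 : ℤ) ^ t.card = 0 := by
  have hmem : ∀ S ∈ ((Finset.Icc 1 (n+1)).powerset.filter (fun t => ∑ i ∈ t, i = n)).filter
      (fun t => ¬ Exc t), S ⊆ Finset.Icc 1 (n+1) ∧ (∑ i ∈ S, i) = n ∧ ¬ Exc S := by
    intro S hs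
    rw [Finset.mem_filter, Finset.mem_filter, Finset.mem_powerset] at hs
    exact ⟨hs.1.1, hs.1.2, hs.2⟩
  have hfacts : ∀ S, S ⊆ Finset.Icc 1 (n+1) → (∑ i ∈ S, i) = n → ¬ Exc S →
      S.Nonempty ∧ 0 ∉ S := by
    intro S hsub hsum hne
    constructor
    · rw [Finset.nonempty_iff_ne_empty]
      rintro rfl
      exact hne exc_empty
    · intro h
      have := hsub h
      rw [Finset.mem_Icc] at this
      omega
  apply Finset.sum_involution (fun S _ => phi S)
  · intro S hs
    obtain ⟨hsub, hsum, hnexc⟩ := hmem S hs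
    obtain ⟨hSne, h0⟩ := hfacts S hsub hsum hnexc
    obtain ⟨_, _, _, _, h5, _, _⟩ := phi_main hSne h0 hnexc
    rcases h5 with h | h <;> rw [h] <;> ring
  · intro S hs _
    obtain ⟨hsub, hsum, hnexc⟩ := hmem S hs
    obtain ⟨hSne, h0⟩ := hfacts S hsub hsum hnexc
    obtain ⟨_, _, _, _, h5, _, _⟩ := phi_main hSne h0 hnexc
    intro heq
    rw [heq] at h5
    omega
  · intro S hs
    obtain ⟨hsub, hsum, hnexc⟩ := hmem S hs
    obtain ⟨hSne, h0⟩ := hfacts S hsub hsum hnexc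
    obtain ⟨h1, h2, h3, h4, _, h6, _⟩ := phi_main hSne h0 hnexc
    rw [Finset.mem_filter, Finset.mem_filter, Finset.mem_powerset]
    refine ⟨⟨?_, by rw [h4, hsum]⟩, h3⟩
    intro x hx
    rw [Finset.mem_Icc]
    have hx1 : 1 ≤ x := mem_pos h2 hx
    have hx2 : x ≤ mx (phi S) := le_mx hx
    have hx3 : mx S ≤ ∑ i ∈ S, i := by
      have := Finset.single_le_sum (f := fun i : ℕ => i) (fun i _ => Nat.zero_le i)
        (mx_mem hSne)
      exact this
    omega
  · intro S hs
    obtain ⟨hsub, hsum, hnexc⟩ := hmem S hs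
    obtain ⟨hSne, h0⟩ := hfacts S hsub hsum hnexc
    exact (phi_main hSne h0 hnexc).2.2.2.2.2.2

noncomputable def wmap (S : Finset ℕ) : ℤ :=
  if S = ∅ then 0 else if mx S = 2 * mi S - 1 then -(mi S : ℤ) else (mi S : ℤ) - 1

noncomputable def emap (j : ℤ) : Finset ℕ :=
  if 0 ≤ j then Finset.Icc (j.toNat + 1) (2 * j.toNat)
  else Finset.Icc ((-j).toNat) (2 * (-j).toNat - 1)

lemma E2_facts (j : ℕ) (hj : 1 ≤ j) :
    wmap (Finset.Icc (j+1) (2*j)) = (j : ℤ) ∧ (Finset.Icc (j+1) (2*j)).card = j := by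
  have hle : j + 1 ≤ 2 * j := by omega
  have hne : Finset.Icc (j+1) (2*j) ≠ ∅ :=
    Finset.nonempty_iff_ne_empty.mp (Finset.nonempty_Icc.mpr hle)
  have hmi : mi (Finset.Icc (j+1) (2*j)) = j + 1 := mi_Icc hle
  have hmx : mx (Finset.Icc (j+1) (2*j)) = 2 * j := mx_Icc hle
  constructor
  · rw [wmap, if_neg hne, hmi, hmx, if_neg (by omega)]
    push_cast; ring
  · rw [Nat.card_Icc]; omega

lemma E1_facts (j : ℕ) (hj : 1 ≤ j) :
    wmap (Finset.Icc j (2*j-1)) = -(j : ℤ) ∧ (Finset.Icc j (2*j-1)).card = j := by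
  have hle : j ≤ 2 * j - 1 := by omega
  have hne : Finset.Icc j (2*j-1) ≠ ∅ :=
    Finset.nonempty_iff_ne_empty.mp (Finset.nonempty_Icc.mpr hle)
  have hmi : mi (Finset.Icc j (2*j-1)) = j := mi_Icc hle
  have hmx : mx (Finset.Icc j (2*j-1)) = 2 * j - 1 := mx_Icc hle
  constructor
  · rw [wmap, if_neg hne, hmi, hmx, if_pos rfl]
  · rw [Nat.card_Icc]; omega

lemma exc_cases {S : Finset ℕ} (h : Exc S) :
    S = ∅ ∨ (∃ j, 1 ≤ j ∧ S = Finset.Icc (j+1) (2*j)) ∨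
      (∃ j, 1 ≤ j ∧ S = Finset.Icc j (2*j-1)) := by
  rcases h with ⟨j, hj⟩ | ⟨j, hj1, hj⟩
  · by_cases h0 : j = 0
    · subst h0
      left
      rw [hj, Finset.Icc_eq_empty (by omega)]
    · exact Or.inr (Or.inl ⟨j, by omega, hj⟩)
  · exact Or.inr (Or.inr ⟨j, hj1, hj⟩)

lemma emap_pos (j : ℕ) : emap (j : ℤ) = Finset.Icc (j+1) (2*j) := by
  rw [emap, if_pos (by positivity)]
  simp

lemma emap_neg (j : ℕ) (hj : 1 ≤ j) : emap (-(j : ℤ)) = Finset.Icc j (2*j-1) := by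
  rw [emap, if_neg (by omega), neg_neg]
  simp

lemma ineqE2 (k n : ℕ) (h : 3*k^2 + k = 2*n) : 2*k ≤ n + 1 := by
  by_cases hk : k = 0
  · omega
  · have h1 : k ≤ k^2 := Nat.le_self_pow two_ne_zero k
    omega

lemma ineqE1 (k n : ℕ) (h : 3*k^2 = 2*n + k) (hk : 1 ≤ k) : 2*k ≤ n + 2 ∧ k ≤ n := by
  by_cases hk1 : k ≤ 1
  · have : k = 1 := by omega
    subst this
    simp at h
    omega
  · have h2 : 2*k ≤ k*k := Nat.mul_le_mul_right k (by omega)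
    have h3 : k^2 = k*k := sq k
    omega

open Classical in
lemma exc_eq (n : ℕ) :
    ∑ t ∈ ((Finset.Icc 1 (n+1)).powerset.filter (fun t => ∑ i ∈ t, i = n)).filter Exc,
      (-1 : ℤ) ^ t.card
    = ∑ j ∈ (Finset.Icc (-(n:ℤ)) (n:ℤ)).filter (fun j => 3*j^2+j = 2*(n:ℤ)),
        (-1 : ℤ) ^ j.natAbs := by
  have hmem : ∀ S ∈ ((Finset.Icc 1 (n+1)).powerset.filter (fun t => ∑ i ∈ t, i = n)).filter
      Exc, (∑ i ∈ S, i) = n ∧ Exc S := by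
    intro S hs
    rw [Finset.mem_filter, Finset.mem_filter, Finset.mem_powerset] at hs
    exact ⟨hs.1.2, hs.2⟩
  apply Finset.sum_nbij' (i := wmap) (j := emap)
  · -- wmap S ∈ target
    intro S hs
    obtain ⟨hsum, hexc⟩ := hmem S hs
    rw [Finset.mem_filter, Finset.mem_Icc]
    rcases exc_cases hexc with rfl | ⟨j, hj1, rfl⟩ | ⟨j, hj1, rfl⟩
    · simp only [Finset.sum_empty] at hsum
      subst hsum
      rw [wmap, if_pos rfl]
      norm_num
    · have hw := (E2_facts j hj1).1
      have hs2 := sumE2 j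
      rw [hsum] at hs2
      have hsum2 : 3*j^2 + j = 2*n := by omega
      have hle := ineqE2 j n hsum2
      rw [hw]
      refine ⟨⟨by omega, by exact_mod_cast (by omega : j ≤ n)⟩, ?_⟩
      exact_mod_cast hsum2
    · have hw := (E1_facts j hj1).1
      have hs2 := sumE1 j hj1
      rw [hsum] at hs2
      have hsum2 : 3*j^2 = 2*n + j := by omega
      have hle := ineqE1 j n hsum2 hj1
      rw [hw]
      refine ⟨⟨?_, ?_⟩, ?_⟩
      · have : j ≤ n := hle.2
        have : (j : ℤ) ≤ (n : ℤ) := by exact_mod_cast this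
        omega
      · have : (0 : ℤ) ≤ (j : ℤ) := by positivity
        omega
      · have hz : (3 : ℤ) * (j:ℤ)^2 = 2*(n:ℤ) + (j:ℤ) := by exact_mod_cast hsum2
        ring_nf
        ring_nf at hz
        omega
  · -- emap a ∈ source
    intro a ha
    rw [Finset.mem_filter, Finset.mem_Icc] at ha
    obtain ⟨⟨han, hna⟩, hcond⟩ := ha
    rw [Finset.mem_filter, Finset.mem_filter, Finset.mem_powerset]
    rcases le_or_gt 0 a with hpos | hneg
    · obtain ⟨k, rfl⟩ : ∃ k : ℕ, a = (k : ℤ) := ⟨a.toNat, by omega⟩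
      have hcn : 3*k^2 + k = 2*n := by exact_mod_cast hcond
      have hle := ineqE2 k n hcn
      rw [emap_pos]
      refine ⟨⟨?_, ?_⟩, ?_⟩
      · intro x hx
        rw [Finset.mem_Icc] at hx ⊢
        omega
      · have := sumE2 k
        omega
      · left; exact ⟨k, rfl⟩
    · obtain ⟨k, rfl⟩ : ∃ k : ℕ, a = -(k : ℤ) := ⟨(-a).toNat, by omega⟩
      have hk1 : 1 ≤ k := by omega
      have hz : (3 : ℤ) * (k:ℤ)^2 = 2*(n:ℤ) + (k:ℤ) := by ring_nf; ring_nf at hcond; omega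
      have hcn : 3*k^2 = 2*n + k := by exact_mod_cast hz
      have hle := ineqE1 k n hcn hk1
      rw [emap_neg k hk1]
      refine ⟨⟨?_, ?_⟩, ?_⟩
      · intro x hx
        rw [Finset.mem_Icc] at hx ⊢
        omega
      · have := sumE1 k hk1
        omega
      · right; exact ⟨k, hk1, rfl⟩
  · -- left inverse
    intro S hs
    obtain ⟨hsum, hexc⟩ := hmem S hs
    rcases exc_cases hexc with rfl | ⟨j, hj1, rfl⟩ | ⟨j, hj1, rfl⟩
    · rw [wmap, if_pos rfl]
      rw [show (0:ℤ) = ((0:ℕ):ℤ) by norm_num, emap_pos]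
      rw [Finset.Icc_eq_empty (by omega)]
    · rw [(E2_facts j hj1).1, emap_pos]
    · rw [(E1_facts j hj1).1, emap_neg j hj1]
  · -- right inverse
    intro a ha
    rw [Finset.mem_filter, Finset.mem_Icc] at ha
    rcases le_or_gt 0 a with hpos | hneg
    · obtain ⟨k, rfl⟩ : ∃ k : ℕ, a = (k : ℤ) := ⟨a.toNat, by omega⟩
      rw [emap_pos]
      by_cases hk0 : k = 0
      · subst hk0
        rw [Finset.Icc_eq_empty (by omega), wmap, if_pos rfl]
        norm_num
      · rw [(E2_facts k (by omega)).1]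
    · obtain ⟨k, rfl⟩ : ∃ k : ℕ, a = -(k : ℤ) := ⟨(-a).toNat, by omega⟩
      have hk1 : 1 ≤ k := by omega
      rw [emap_neg k hk1, (E1_facts k hk1).1]
  · -- values
    intro S hs
    obtain ⟨hsum, hexc⟩ := hmem S hs
    rcases exc_cases hexc with rfl | ⟨j, hj1, rfl⟩ | ⟨j, hj1, rfl⟩
    · rw [wmap, if_pos rfl]
      simp
    · rw [(E2_facts j hj1).1, (E2_facts j hj1).2]
      simp
    · rw [(E1_facts j hj1).1, (E1_facts j hj1).2]
      simp

open Classical in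
lemma coeff_prod_eq (n : ℕ) :
    PowerSeries.coeff n (∏ m ∈ Finset.Icc 1 (n + 1), (1 - (PowerSeries.X : PowerSeries ℤ) ^ m)) =
      ∑ t ∈ ((Finset.Icc 1 (n+1)).powerset.filter (fun t => ∑ i ∈ t, i = n)),
        (-1 : ℤ) ^ t.card := by
  have h1 : (∏ m ∈ Finset.Icc 1 (n + 1), (1 - (PowerSeries.X : PowerSeries ℤ) ^ m))
      = ∑ t ∈ (Finset.Icc 1 (n+1)).powerset,
          (PowerSeries.C) ((-1:ℤ)^t.card) * PowerSeries.X ^ (∑ i ∈ t, i) := by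
    calc ∏ m ∈ Finset.Icc 1 (n + 1), (1 - (PowerSeries.X : PowerSeries ℤ) ^ m)
        = ∏ m ∈ Finset.Icc 1 (n + 1),
            ((fun m => -(PowerSeries.X : PowerSeries ℤ) ^ m) m + (fun _ => (1 : PowerSeries ℤ)) m) := by
          apply Finset.prod_congr rfl
          intro m _
          simp [sub_eq_neg_add]
      _ = ∑ t ∈ (Finset.Icc 1 (n+1)).powerset,
            (∏ i ∈ t, -(PowerSeries.X : PowerSeries ℤ) ^ i) *
              ∏ i ∈ (Finset.Icc 1 (n+1)) \ t, (1 : PowerSeries ℤ) :=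
          Finset.prod_add _ _ _
      _ = ∑ t ∈ (Finset.Icc 1 (n+1)).powerset,
            (PowerSeries.C) ((-1:ℤ)^t.card) * PowerSeries.X ^ (∑ i ∈ t, i) := by
          apply Finset.sum_congr rfl
          intro t _
          rw [Finset.prod_const_one, mul_one]
          calc ∏ i ∈ t, -(PowerSeries.X : PowerSeries ℤ) ^ i
              = ∏ i ∈ t, ((-1 : PowerSeries ℤ) * (PowerSeries.X : PowerSeries ℤ) ^ i) := by
                apply Finset.prod_congr rfl
                intro i _
                rw [neg_one_mul]
            _ = (∏ _i ∈ t, (-1 : PowerSeries ℤ)) * ∏ i ∈ t, (PowerSeries.X : PowerSeries ℤ) ^ i :=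
                Finset.prod_mul_distrib
            _ = (PowerSeries.C) ((-1:ℤ)^t.card) * PowerSeries.X ^ (∑ i ∈ t, i) := by
                rw [Finset.prod_const, Finset.prod_pow_eq_pow_sum]
                congr 1
                simp
  rw [h1, map_sum]
  have h2 : ∀ t : Finset ℕ,
      PowerSeries.coeff n ((PowerSeries.C) ((-1:ℤ)^t.card) * PowerSeries.X ^ (∑ i ∈ t, i))
        = if (∑ i ∈ t, i) = n then (-1:ℤ)^t.card else 0 := by
    intro t
    rw [PowerSeries.coeff_C_mul, PowerSeries.coeff_X_pow]
    by_cases h : (∑ i ∈ t, i) = n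
    · rw [if_pos h, if_pos h.symm, mul_one]
    · rw [if_neg h, if_neg (fun hh => h hh.symm), mul_zero]
  rw [Finset.sum_congr rfl (fun t _ => h2 t)]
  rw [← Finset.sum_filter]

open PowerSeries in
/-- Euler's pentagonal number theorem, stated coefficientwise: for each `n`, the
`q^n`-coefficient of `∏_{m=1}^{n+1} (1 - q^m)` (which agrees with the coefficient
of the infinite product `∏_{m ≥ 1} (1 - q^m)`) equals the sum of `(-1)^j` over the
integers `j` with `(3j² + j)/2 = n`. -/
theorem stmt_10 (n : ℕ) :
    PowerSeries.coeff n (∏ m ∈ Finset.Icc 1 (n + 1), (1 - (X : PowerSeries ℤ) ^ m)) =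
      ∑ j ∈ Finset.Icc (-(n : ℤ)) (n : ℤ),
        if 3 * j ^ 2 + j = 2 * (n : ℤ) then (-1 : ℤ) ^ j.natAbs else 0 := by
  classical
  rw [coeff_prod_eq n]
  rw [← Finset.sum_filter_add_sum_filter_not _ Exc]
  rw [exc_eq n, sum_nonexc n, add_zero]
  rw [Finset.sum_filter]
end
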